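/- For every n ≥ 1 and 0 ≤ a ≤ n, the recursively defined operators X_i^±, K_i on V_a^n satisfy all the defining relations of U_q(sl_n): each K_i is invertible, the K_i pairwise commute, K_i X_j^± = q^{±a_{ij}} X_j^± K_i (with a_{ij} = 2, −1, 0 according as i = j, |i−j| = 1, |i−j| ≥ 2), X_i^+ X_j^- − X_j^- X_i^+ = δ_{ij}(K_i − K_i^{-1})/(q − q^{-1}), X_i^± X_j^± = X_j^± X_i^± when |i−j| ≥ 2, and the quantum Serre relations (X_i^±)² X_j^± − (q + q^{-1}) X_i^± X_j^± X_i^± + X_j^± (X_i^±)² = 0 when |i−j| = 1. Hence they determine an 𝔸-algebra homomorphism U_q(sl_n) → End_𝔸(V_a^n), making V_a^n a U_q(sl_n)-module. -/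

import Mathlib

noncomputable section

open scoped TensorProduct

set_option maxHeartbeats 1000000
set_option synthInstance.maxHeartbeats 400000

/-- The ground field `𝔸 = ℚ(q)`. -/
abbrev A : Type := RatFunc ℚ

/-- The element `q ∈ 𝔸`. -/
def qq : A := RatFunc.X

/-- The set of `a`-element subsets of `{0, 1, …, n-1}` (a model for the
`a`-element subsets of `{1, …, n}`), the basis of `V_a^n`. -/
abbrev BS (n a : ℕ) : Type := {s : Finset ℕ // s ⊆ Finset.range n ∧ s.card = a}

instance BS.fintype (n a : ℕ) : Fintype (BS n a) :=
  Fintype.subtype ((Finset.range n).powerset.filter fun s => s.card = a) (by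
    intro s
    simp [Finset.mem_powerset, Finset.mem_filter])

/-- The fundamental representation `V_a^n`, as the `𝔸`-vector space with basis the
`a`-element subsets of an `n`-element set. -/
abbrev V (n a : ℕ) : Type := BS n a → A

/-- `i₋₁ : V_{a-1}^{n-1} → V_a^n` (here with indices shifted:
`iminus n a : V_a^n → V_{a+1}^{n+1}`), the inclusion of the summand of subsets containing
the new top element `n`. -/
def iminus (n a : ℕ) : V n a →ₗ[A] V (n+1) (a+1) where
  toFun f s := if h : n ∈ s.1 then
      f ⟨s.1.erase n, by
        constructor
        · intro x hx
          have hx' := Finset.mem_erase.mp hx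
          have hx2 := s.2.1 hx'.2
          simp only [Finset.mem_range] at hx2 ⊢
          omega
        · rw [Finset.card_erase_of_mem h, s.2.2]; omega⟩
    else 0
  map_add' f g := by
    funext s
    simp only [Pi.add_apply]
    by_cases h : n ∈ s.1 <;> simp [h]
  map_smul' c f := by
    funext s
    simp only [Pi.smul_apply, smul_eq_mul, RingHom.id_apply]
    by_cases h : n ∈ s.1 <;> simp [h]

/-- `i₀ : V_a^{n-1} → V_a^n` (as `izero n a : V_a^n → V_a^{n+1}`), the inclusion of the
summand of subsets not containing the new top element. -/
def izero (n a : ℕ) : V n a →ₗ[A] V (n+1) a where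
  toFun f s := if h : n ∈ s.1 then 0 else
      f ⟨s.1, by
        refine ⟨fun x hx => ?_, s.2.2⟩
        have hx2 := s.2.1 hx
        simp only [Finset.mem_range] at hx2 ⊢
        rcases Nat.lt_succ_iff_lt_or_eq.mp hx2 with h' | h'
        · exact h'
        · exact absurd (h' ▸ hx) h⟩
  map_add' f g := by
    funext s
    simp only [Pi.add_apply]
    by_cases h : n ∈ s.1 <;> simp [h]
  map_smul' c f := by
    funext s
    simp only [Pi.smul_apply, smul_eq_mul, RingHom.id_apply]
    by_cases h : n ∈ s.1 <;> simp [h]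

/-- `p₋₁ : V_a^n → V_{a-1}^{n-1}` (as `pminus n a : V_{a+1}^{n+1} → V_a^n`), the projection
onto the summand of subsets containing the top element. -/
def pminus (n a : ℕ) : V (n+1) (a+1) →ₗ[A] V n a where
  toFun f t := f ⟨insert n t.1, by
    have hn : n ∉ t.1 := fun h => by
      have := t.2.1 h; simp [Finset.mem_range] at this
    constructor
    · intro x hx
      rcases Finset.mem_insert.mp hx with rfl | hx
      · simp
      · have := t.2.1 hx; simp only [Finset.mem_range] at this ⊢; omega
    · rw [Finset.card_insert_of_notMem hn, t.2.2]⟩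
  map_add' f g := rfl
  map_smul' c f := rfl

/-- `p₀ : V_a^n → V_a^{n-1}` (as `pzero n a : V_a^{n+1} → V_a^n`), the projection onto the
summand of subsets not containing the top element. -/
def pzero (n a : ℕ) : V (n+1) a →ₗ[A] V n a where
  toFun f t := f ⟨t.1, by
    refine ⟨fun x hx => ?_, t.2.2⟩
    have := t.2.1 hx; simp only [Finset.mem_range] at this ⊢; omega⟩
  map_add' f g := rfl
  map_smul' c f := rfl

/-- The diagonal operator on `V_a^n` acting by the scalar `x` on basis subsets containing `m`
and by `y` on those not containing `m`; for `m = n-1` this is `x • i₋₁ p₋₁ + y • i₀ p₀`. -/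
def diagOp (n a m : ℕ) (x y : A) : Module.End A (V n a) where
  toFun f s := (if m ∈ s.1 then x else y) * f s
  map_add' f g := by
    funext s
    simp only [Pi.add_apply]
    ring
  map_smul' c f := by
    funext s
    simp only [Pi.smul_apply, smul_eq_mul, RingHom.id_apply]
    ring

/-- The recursively defined action of the generator `X_i^+` on `V_a^n`
(`XpOp n a i`, where `i` is the literal subscript, `1 ≤ i ≤ n-1`). -/
def XpOp : (n a i : ℕ) → Module.End A (V n a)
  | 0, _, _ => 0
  | 1, _, _ => 0
  | _+2, 0, _ => 0
  | n+2, a+1, i =>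
    if a + 1 = n + 2 then 0
    else if i = n + 1 then
      (iminus (n+1) a) ∘ₗ (izero n a) ∘ₗ (pminus n a) ∘ₗ (pzero (n+1) (a+1))
    else
      (iminus (n+1) a) ∘ₗ (XpOp (n+1) a i) ∘ₗ (pminus (n+1) a)
      + (izero (n+1) (a+1)) ∘ₗ (XpOp (n+1) (a+1) i) ∘ₗ (pzero (n+1) (a+1))

/-- The recursively defined action of the generator `X_i^-` on `V_a^n`. -/
def XmOp : (n a i : ℕ) → Module.End A (V n a)
  | 0, _, _ => 0
  | 1, _, _ => 0
  | _+2, 0, _ => 0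
  | n+2, a+1, i =>
    if a + 1 = n + 2 then 0
    else if i = n + 1 then
      (izero (n+1) (a+1)) ∘ₗ (iminus n a) ∘ₗ (pzero n a) ∘ₗ (pminus (n+1) a)
    else
      (iminus (n+1) a) ∘ₗ (XmOp (n+1) a i) ∘ₗ (pminus (n+1) a)
      + (izero (n+1) (a+1)) ∘ₗ (XmOp (n+1) (a+1) i) ∘ₗ (pzero (n+1) (a+1))

/-- The recursively defined action of the generator `K_i` on `V_a^n`.  The middle factors
`diagOp … 1 q` and `diagOp … q⁻¹ 1` are the operators `i₋₁ p₋₁ + q i₀ p₀` and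
`q⁻¹ i₋₁ p₋₁ + i₀ p₀` of the recursion. -/
def KOp : (n a i : ℕ) → Module.End A (V n a)
  | 0, _, _ => 1
  | 1, _, _ => 1
  | _+2, 0, _ => 1
  | n+2, a+1, i =>
    if a + 1 = n + 2 then 1
    else if i = n + 1 then
      (iminus (n+1) a) ∘ₗ (diagOp (n+1) a n 1 qq) ∘ₗ (pminus (n+1) a)
      + (izero (n+1) (a+1)) ∘ₗ (diagOp (n+1) (a+1) n qq⁻¹ 1) ∘ₗ (pzero (n+1) (a+1))
    else
      (iminus (n+1) a) ∘ₗ (KOp (n+1) a i) ∘ₗ (pminus (n+1) a)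
      + (izero (n+1) (a+1)) ∘ₗ (KOp (n+1) (a+1) i) ∘ₗ (pzero (n+1) (a+1))

/-- The recursively defined action of `K_i⁻¹` on `V_a^n` (the inverse of `KOp`),
given by the same recursion with `q` and `q⁻¹` interchanged. -/
def KinvOp : (n a i : ℕ) → Module.End A (V n a)
  | 0, _, _ => 1
  | 1, _, _ => 1
  | _+2, 0, _ => 1
  | n+2, a+1, i =>
    if a + 1 = n + 2 then 1
    else if i = n + 1 then
      (iminus (n+1) a) ∘ₗ (diagOp (n+1) a n 1 qq⁻¹) ∘ₗ (pminus (n+1) a)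
      + (izero (n+1) (a+1)) ∘ₗ (diagOp (n+1) (a+1) n qq 1) ∘ₗ (pzero (n+1) (a+1))
    else
      (iminus (n+1) a) ∘ₗ (KinvOp (n+1) a i) ∘ₗ (pminus (n+1) a)
      + (izero (n+1) (a+1)) ∘ₗ (KinvOp (n+1) (a+1) i) ∘ₗ (pzero (n+1) (a+1))
/-! ### The quantum group `U_q(sl_n)` by generators and relations.

We present the algebra with `m = n - 1` generators of each kind `K i, K i⁻¹, X i⁺, X i⁻`,
indexed by `i : Fin m` (so `i` corresponds to the subscript `i + 1 ∈ {1, …, n-1}`). -/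

/-- Generators of `U_q(sl_n)` (with `m = n-1`). -/
inductive UqGen (m : ℕ) : Type
  | K : Fin m → UqGen m
  | Kinv : Fin m → UqGen m
  | Xp : Fin m → UqGen m
  | Xm : Fin m → UqGen m

/-- The free `𝔸`-algebra on the generators. -/
abbrev FA (m : ℕ) : Type := FreeAlgebra A (UqGen m)

namespace FA
variable {m : ℕ}
def K (i : Fin m) : FA m := FreeAlgebra.ι A (UqGen.K i)
def Kinv (i : Fin m) : FA m := FreeAlgebra.ι A (UqGen.Kinv i)
def Xp (i : Fin m) : FA m := FreeAlgebra.ι A (UqGen.Xp i)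
def Xm (i : Fin m) : FA m := FreeAlgebra.ι A (UqGen.Xm i)
end FA

/-- The Cartan integers `(i,j)` of type `A_m`: `2` if `i = j`, `-1` if `|i-j| = 1`,
`0` if `|i-j| ≥ 2`. -/
def cart {m : ℕ} (i j : Fin m) : ℤ :=
  if i = j then 2 else if (i : ℕ) + 1 = j ∨ (j : ℕ) + 1 = i then -1 else 0

/-- The defining relations of `U_q(sl_n)`. -/
inductive uqRel (m : ℕ) : FA m → FA m → Prop
  | KKinv (i : Fin m) : uqRel m (FA.K i * FA.Kinv i) 1
  | KinvK (i : Fin m) : uqRel m (FA.Kinv i * FA.K i) 1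
  | KK (i j : Fin m) : uqRel m (FA.K i * FA.K j) (FA.K j * FA.K i)
  | KXp (i j : Fin m) : uqRel m (FA.K i * FA.Xp j) (qq ^ (cart i j) • (FA.Xp j * FA.K i))
  | KXm (i j : Fin m) : uqRel m (FA.K i * FA.Xm j) (qq ^ (-cart i j) • (FA.Xm j * FA.K i))
  | XpXm (i j : Fin m) :
      uqRel m (FA.Xp i * FA.Xm j - FA.Xm j * FA.Xp i)
        (if i = j then (qq - qq⁻¹)⁻¹ • (FA.K i - FA.Kinv i) else 0)
  | XpXp (i j : Fin m) (h : (i : ℕ) + 2 ≤ j ∨ (j : ℕ) + 2 ≤ i) :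
      uqRel m (FA.Xp i * FA.Xp j) (FA.Xp j * FA.Xp i)
  | XmXm (i j : Fin m) (h : (i : ℕ) + 2 ≤ j ∨ (j : ℕ) + 2 ≤ i) :
      uqRel m (FA.Xm i * FA.Xm j) (FA.Xm j * FA.Xm i)
  | serreP (i j : Fin m) (h : (i : ℕ) + 1 = j ∨ (j : ℕ) + 1 = i) :
      uqRel m (FA.Xp i ^ 2 * FA.Xp j - (qq + qq⁻¹) • (FA.Xp i * FA.Xp j * FA.Xp i)
        + FA.Xp j * FA.Xp i ^ 2) 0
  | serreM (i j : Fin m) (h : (i : ℕ) + 1 = j ∨ (j : ℕ) + 1 = i) :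
      uqRel m (FA.Xm i ^ 2 * FA.Xm j - (qq + qq⁻¹) • (FA.Xm i * FA.Xm j * FA.Xm i)
        + FA.Xm j * FA.Xm i ^ 2) 0

/-- The quantum group `U_q(sl_{m+1})`, presented by generators and relations.
For `U_q(sl_n)` take `m = n - 1`. -/
abbrev Uq (m : ℕ) : Type := RingQuot (uqRel m)

namespace Uq
variable {m : ℕ}
/-- The generator `K_{i+1}` of `U_q(sl_n)`. -/
def K (i : Fin m) : Uq m := RingQuot.mkAlgHom A (uqRel m) (FA.K i)
/-- The generator `K_{i+1}⁻¹` of `U_q(sl_n)`. -/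
def Kinv (i : Fin m) : Uq m := RingQuot.mkAlgHom A (uqRel m) (FA.Kinv i)
/-- The generator `X_{i+1}^+` of `U_q(sl_n)`. -/
def Xp (i : Fin m) : Uq m := RingQuot.mkAlgHom A (uqRel m) (FA.Xp i)
/-- The generator `X_{i+1}^-` of `U_q(sl_n)`. -/
def Xm (i : Fin m) : Uq m := RingQuot.mkAlgHom A (uqRel m) (FA.Xm i)
end Uq
/-! ### The duality maps `d_{a,n}`, triple invariants, and the pivotal elements `τ`. -/

/-- The sum-of-coefficients functional on `V_a^n`. -/
def sumF (n a : ℕ) : V n a →ₗ[A] A where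
  toFun f := ∑ s : BS n a, f s
  map_add' f g := by simp [Finset.sum_add_distrib]
  map_smul' c f := by simp [Finset.mul_sum]

/-- The "trivial" map `V_a^n → (V_c^n)^*`; when `V_a^n` and `V_c^n` are one-dimensional
(`a = 0` or `a = n`, and correspondingly for `c`) it sends the basis vector to the dual
basis vector.  Used for the base cases of `d_{a,n}`. -/
def dtriv (n a c : ℕ) : V n a →ₗ[A] Module.Dual A (V n c) :=
  LinearMap.smulRight (sumF n a) (sumF n c)

/-- The map `d_{a,n} : V_a^n → (V_{n-a}^n)^*`, defined recursively by
`d_{a,n} = i₀ ∘ d_{a-1,n-1} ∘ p₋₁ + (-q)^{-a} i₋₁ ∘ d_{a,n-1} ∘ p₀`, with both base cases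
sending the basis vector to the dual basis vector.  Here `dmap n a c` has target
`(V_c^n)^*`, to be used with `c = n - a`. -/
def dmap : (n a c : ℕ) → (V n a →ₗ[A] Module.Dual A (V n c))
  | 0, a, c => dtriv 0 a c
  | n+1, 0, c => dtriv (n+1) 0 c
  | n+1, a+1, c =>
    if a + 1 = n + 1 then dtriv (n+1) (a+1) c
    else
      match c with
      | 0 => 0
      | c+1 =>
        (pzero n (c+1)).dualMap ∘ₗ (dmap n a (c+1)) ∘ₗ (pminus n a)
        + ((-qq) ^ (a+1))⁻¹ •
            ((pminus n c).dualMap ∘ₗ (dmap n (a+1) c) ∘ₗ (pzero n (a+1)))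

section voutvin

open TensorProduct

/-- First term of the recursion for `v_out`: `(-1)^c q^{b+c} (i₋₁ ⊗ i₀ ⊗ i₀)`. -/
def vterm1 (n a b c : ℕ) (v : V n a ⊗[A] (V n b ⊗[A] V n c)) :
    V (n+1) (a+1) ⊗[A] (V (n+1) b ⊗[A] V (n+1) c) :=
  ((-1 : A)^c * qq^(b+c)) •
    (TensorProduct.map (iminus n a) (TensorProduct.map (izero n b) (izero n c)) v)

/-- Second term of the recursion for `v_out`: `(-1)^a q^c (i₀ ⊗ i₋₁ ⊗ i₀)`. -/
def vterm2 (n a b c : ℕ) (v : V n a ⊗[A] (V n b ⊗[A] V n c)) :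
    V (n+1) a ⊗[A] (V (n+1) (b+1) ⊗[A] V (n+1) c) :=
  ((-1 : A)^a * qq^c) •
    (TensorProduct.map (izero n a) (TensorProduct.map (iminus n b) (izero n c)) v)

/-- Third term of the recursion for `v_out`: `(-1)^b (i₀ ⊗ i₀ ⊗ i₋₁)`. -/
def vterm3 (n a b c : ℕ) (v : V n a ⊗[A] (V n b ⊗[A] V n c)) :
    V (n+1) a ⊗[A] (V (n+1) b ⊗[A] V (n+1) (c+1)) :=
  ((-1 : A)^b) •
    (TensorProduct.map (izero n a) (TensorProduct.map (izero n b) (iminus n c)) v)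

/-- The triple invariant `v_out^n_{a,b,c} ∈ V_a^n ⊗ V_b^n ⊗ V_c^n` (intended for
`a + b + c = n`), defined by the recursion of Definition `defn:trivalent-vertices`,
omitting any term with a negative subscript. -/
def voutE : (n a b c : ℕ) → V n a ⊗[A] (V n b ⊗[A] V n c)
  | 0, _, _, _ => (fun _ => (1:A)) ⊗ₜ[A] ((fun _ => (1:A)) ⊗ₜ[A] (fun _ => (1:A)))
  | n+1, 0, 0, 0 => 0
  | n+1, a+1, 0, 0 => vterm1 n a 0 0 (voutE n a 0 0)
  | n+1, 0, b+1, 0 => vterm2 n 0 b 0 (voutE n 0 b 0)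
  | n+1, 0, 0, c+1 => vterm3 n 0 0 c (voutE n 0 0 c)
  | n+1, a+1, b+1, 0 =>
      vterm1 n a (b+1) 0 (voutE n a (b+1) 0) + vterm2 n (a+1) b 0 (voutE n (a+1) b 0)
  | n+1, a+1, 0, c+1 =>
      vterm1 n a 0 (c+1) (voutE n a 0 (c+1)) + vterm3 n (a+1) 0 c (voutE n (a+1) 0 c)
  | n+1, 0, b+1, c+1 =>
      vterm2 n 0 b (c+1) (voutE n 0 b (c+1)) + vterm3 n 0 (b+1) c (voutE n 0 (b+1) c)
  | n+1, a+1, b+1, c+1 =>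
      vterm1 n a (b+1) (c+1) (voutE n a (b+1) (c+1))
      + vterm2 n (a+1) b (c+1) (voutE n (a+1) b (c+1))
      + vterm3 n (a+1) (b+1) c (voutE n (a+1) (b+1) c)

/-- First term of the recursion for `v_in`: `(-1)^c (…) ∘ (p₋₁ ⊗ p₀ ⊗ p₀)`. -/
def wterm1 (n a b c : ℕ) (φ : V n a ⊗[A] (V n b ⊗[A] V n c) →ₗ[A] A) :
    V (n+1) (a+1) ⊗[A] (V (n+1) b ⊗[A] V (n+1) c) →ₗ[A] A :=
  ((-1 : A)^c) •
    (φ ∘ₗ TensorProduct.map (pminus n a) (TensorProduct.map (pzero n b) (pzero n c)))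

/-- Second term of the recursion for `v_in`: `(-1)^a q^{-a} (…) ∘ (p₀ ⊗ p₋₁ ⊗ p₀)`. -/
def wterm2 (n a b c : ℕ) (φ : V n a ⊗[A] (V n b ⊗[A] V n c) →ₗ[A] A) :
    V (n+1) a ⊗[A] (V (n+1) (b+1) ⊗[A] V (n+1) c) →ₗ[A] A :=
  ((-1 : A)^a * (qq^a)⁻¹) •
    (φ ∘ₗ TensorProduct.map (pzero n a) (TensorProduct.map (pminus n b) (pzero n c)))

/-- Third term of the recursion for `v_in`: `(-1)^b q^{-a-b} (…) ∘ (p₀ ⊗ p₀ ⊗ p₋₁)`. -/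
def wterm3 (n a b c : ℕ) (φ : V n a ⊗[A] (V n b ⊗[A] V n c) →ₗ[A] A) :
    V (n+1) a ⊗[A] (V (n+1) b ⊗[A] V (n+1) (c+1)) →ₗ[A] A :=
  ((-1 : A)^b * (qq^(a+b))⁻¹) •
    (φ ∘ₗ TensorProduct.map (pzero n a) (TensorProduct.map (pzero n b) (pminus n c)))

/-- The triple coinvariant `v_in^n_{a,b,c} : V_a^n ⊗ V_b^n ⊗ V_c^n → 𝔸` (intended for
`a + b + c = n`), defined recursively, omitting any term with a negative subscript. -/
def vinE : (n a b c : ℕ) → (V n a ⊗[A] (V n b ⊗[A] V n c) →ₗ[A] A)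
  | 0, a, b, c =>
      (LinearMap.mul' A A) ∘ₗ
        TensorProduct.map (sumF 0 a)
          ((LinearMap.mul' A A) ∘ₗ TensorProduct.map (sumF 0 b) (sumF 0 c))
  | n+1, 0, 0, 0 => 0
  | n+1, a+1, 0, 0 => wterm1 n a 0 0 (vinE n a 0 0)
  | n+1, 0, b+1, 0 => wterm2 n 0 b 0 (vinE n 0 b 0)
  | n+1, 0, 0, c+1 => wterm3 n 0 0 c (vinE n 0 0 c)
  | n+1, a+1, b+1, 0 =>
      wterm1 n a (b+1) 0 (vinE n a (b+1) 0) + wterm2 n (a+1) b 0 (vinE n (a+1) b 0)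
  | n+1, a+1, 0, c+1 =>
      wterm1 n a 0 (c+1) (vinE n a 0 (c+1)) + wterm3 n (a+1) 0 c (vinE n (a+1) 0 c)
  | n+1, 0, b+1, c+1 =>
      wterm2 n 0 b (c+1) (vinE n 0 b (c+1)) + wterm3 n 0 (b+1) c (vinE n 0 (b+1) c)
  | n+1, a+1, b+1, c+1 =>
      wterm1 n a (b+1) (c+1) (vinE n a (b+1) (c+1))
      + wterm2 n (a+1) b (c+1) (vinE n (a+1) b (c+1))
      + wterm3 n (a+1) (b+1) c (vinE n (a+1) (b+1) c)

end voutvin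

/-- The operator `∏_{j=1}^{n-1} K_j^j` on `V_a^n`. -/
def kjOp (n a : ℕ) : Module.End A (V n a) :=
  (List.ofFn fun i : Fin (n-1) => (KOp n a ((i : ℕ)+1)) ^ ((i : ℕ)+1)).prod

/-- The pivotal operator `τ_n = ∏_{j=1}^{n-1} K_j^{j(n-j)}` on `V_a^n`. -/
def tauOp (n a : ℕ) : Module.End A (V n a) :=
  (List.ofFn fun i : Fin (n-1) => (KOp n a ((i : ℕ)+1)) ^ (((i : ℕ)+1) * (n - ((i : ℕ)+1)))).prod

/-- The inverse pivotal operator `τ_n⁻¹ = ∏_{j=1}^{n-1} K_j^{-j(n-j)}` on `V_a^n`. -/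
def tauinvOp (n a : ℕ) : Module.End A (V n a) :=
  (List.ofFn fun i : Fin (n-1) => (KinvOp n a ((i : ℕ)+1)) ^ (((i : ℕ)+1) * (n - ((i : ℕ)+1)))).prod

/-- The element `τ_n = ∏_{j=1}^{n-1} K_j^{j(n-j)} ∈ U_q(sl_n)`. -/
def tauU (n : ℕ) : Uq (n-1) :=
  (List.ofFn fun i : Fin (n-1) => (Uq.K i) ^ (((i : ℕ)+1) * (n - ((i : ℕ)+1)))).prod

/-- The Cartan integers for literal subscripts `i, j ∈ {1, …, n-1}`. -/
def cartN (i j : ℕ) : ℤ :=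
  if i = j then 2 else if i + 1 = j ∨ j + 1 = i then -1 else 0

/-! ### Closed forms for the operators -/

lemma Vcongr {n a : ℕ} (f : V n a) {s t : BS n a} (h : s.1 = t.1) : f s = f t :=
  congrArg f (Subtype.ext h)

lemma qq_ne_zero : qq ≠ 0 := RatFunc.X_ne_zero

lemma BS.mem_lt {n a : ℕ} (s : BS n a) {x : ℕ} (hx : x ∈ s.1) : x < n := by
  simpa [Finset.mem_range] using s.2.1 hx

open Classical in
/-- The general "conditioned move with coefficient" operator on `V n a`:
`(genOp P m c f) s = c s * f (m s)` if `P s` holds, and `0` otherwise. -/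
noncomputable def genOp (n a : ℕ) (P : Finset ℕ → Prop) (m : Finset ℕ → Finset ℕ)
    (c : Finset ℕ → A)
    (hm : ∀ s : BS n a, P s.1 → (m s.1 ⊆ Finset.range n ∧ (m s.1).card = a)) :
    Module.End A (V n a) where
  toFun f s := if h : P s.1 then c s.1 * f ⟨m s.1, (hm s h).1, (hm s h).2⟩ else 0
  map_add' f g := by
    funext s
    by_cases h : P s.1 <;> simp [h] <;> ring
  map_smul' r f := by
    funext s
    by_cases h : P s.1 <;> simp [h] <;> ring

lemma genOp_apply_pos {n a : ℕ} {P m c hm} (f : V n a) (s : BS n a) (h : P s.1)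
    (t : BS n a) (ht : t.1 = m s.1) :
    genOp n a P m c hm f s = c s.1 * f t := by
  simp only [genOp, LinearMap.coe_mk, AddHom.coe_mk, dif_pos h]
  rw [Vcongr f (show (⟨m s.1, (hm s h).1, (hm s h).2⟩ : BS n a).1 = t.1 from ht.symm)]

lemma genOp_apply_neg {n a : ℕ} {P m c hm} (f : V n a) (s : BS n a) (h : ¬ P s.1) :
    genOp n a P m c hm f s = 0 := by
  simp only [genOp, LinearMap.coe_mk, AddHom.coe_mk, dif_neg h]

/-- Composition of two `genOp`s is a `genOp`. -/
lemma genOp_mul {n a : ℕ} (P₁ m₁ c₁ h₁ P₂ m₂ c₂ h₂) :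
    genOp n a P₁ m₁ c₁ h₁ * genOp n a P₂ m₂ c₂ h₂
      = genOp n a (fun t => P₁ t ∧ P₂ (m₁ t)) (fun t => m₂ (m₁ t))
          (fun t => c₁ t * c₂ (m₁ t))
          (fun s h => h₂ ⟨m₁ s.1, (h₁ s h.1).1, (h₁ s h.1).2⟩ h.2) := by
  apply LinearMap.ext; intro f; funext s
  rw [Module.End.mul_apply]
  by_cases h : P₁ s.1
  · have hu := h₁ s h
    set u : BS n a := ⟨m₁ s.1, hu.1, hu.2⟩ with hudef
    rw [genOp_apply_pos _ s h u rfl]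
    by_cases h' : P₂ (m₁ s.1)
    · have hv := h₂ u h'
      rw [genOp_apply_pos _ u h' ⟨m₂ u.1, hv.1, hv.2⟩ rfl,
        genOp_apply_pos _ s ⟨h, h'⟩ ⟨m₂ u.1, hv.1, hv.2⟩ rfl]
      ring
    · rw [genOp_apply_neg _ _ h', genOp_apply_neg _ s (fun hc => h' hc.2), mul_zero]
  · rw [genOp_apply_neg _ s h, genOp_apply_neg _ s (fun hc => h hc.1)]

/-- Two `genOp`s agree if their data agree on all valid subsets. -/
lemma genOp_congr {n a : ℕ} {P m c hm Q k d hk}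
    (hPQ : ∀ s : BS n a, P s.1 ↔ Q s.1)
    (hdata : ∀ s : BS n a, P s.1 → m s.1 = k s.1 ∧ c s.1 = d s.1) :
    genOp n a P m c hm = genOp n a Q k d hk := by
  apply LinearMap.ext; intro f; funext s
  by_cases h : P s.1
  · obtain ⟨hmk, hcd⟩ := hdata s h
    rw [genOp_apply_pos _ s h ⟨m s.1, (hm s h).1, (hm s h).2⟩ rfl,
      genOp_apply_pos _ s ((hPQ s).mp h) ⟨m s.1, (hm s h).1, (hm s h).2⟩ hmk, hcd]
  · rw [genOp_apply_neg _ s h, genOp_apply_neg _ s (fun hc => h ((hPQ s).mpr hc))]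

lemma genOp_eq_zero {n a : ℕ} {P m c hm} (h : ∀ s : BS n a, ¬ P s.1) :
    genOp n a P m c hm = 0 := by
  apply LinearMap.ext; intro f; funext s
  rw [genOp_apply_neg _ s (h s)]; rfl

lemma genOp_eq_one {n a : ℕ} {P m c hm} (hP : ∀ s : BS n a, P s.1)
    (hdata : ∀ s : BS n a, m s.1 = s.1 ∧ c s.1 = 1) :
    genOp n a P m c hm = 1 := by
  apply LinearMap.ext; intro f; funext s
  rw [genOp_apply_pos _ s (hP s) s (hdata s).1.symm, (hdata s).2, one_mul]; rfl

lemma smul_genOp {n a : ℕ} (r : A) (P m c hm) :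
    r • genOp n a P m c hm = genOp n a P m (fun t => r * c t) hm := by
  apply LinearMap.ext; intro f; funext s
  rw [LinearMap.smul_apply, Pi.smul_apply]
  by_cases h : P s.1
  · rw [genOp_apply_pos _ s h ⟨m s.1, (hm s h).1, (hm s h).2⟩ rfl,
      genOp_apply_pos _ s h ⟨m s.1, (hm s h).1, (hm s h).2⟩ rfl, smul_eq_mul]
    ring
  · rw [genOp_apply_neg _ s h, genOp_apply_neg _ s h, smul_zero]
lemma iminus_apply_pos {n a : ℕ} (f : V n a) (s : BS (n+1) (a+1)) (h : n ∈ s.1)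
    (t : BS n a) (ht : t.1 = s.1.erase n) : iminus n a f s = f t := by
  simp only [iminus, LinearMap.coe_mk, AddHom.coe_mk, dif_pos h]
  exact Vcongr f (by simp [ht])

lemma iminus_apply_neg {n a : ℕ} (f : V n a) (s : BS (n+1) (a+1)) (h : n ∉ s.1) :
    iminus n a f s = 0 := by
  simp only [iminus, LinearMap.coe_mk, AddHom.coe_mk, dif_neg h]

lemma izero_apply_neg {n a : ℕ} (f : V n a) (s : BS (n+1) a) (h : n ∈ s.1) :
    izero n a f s = 0 := by
  simp only [izero, LinearMap.coe_mk, AddHom.coe_mk, dif_pos h]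

lemma izero_apply_pos {n a : ℕ} (f : V n a) (s : BS (n+1) a) (h : n ∉ s.1)
    (t : BS n a) (ht : t.1 = s.1) : izero n a f s = f t := by
  simp only [izero, LinearMap.coe_mk, AddHom.coe_mk, dif_neg h]
  exact Vcongr f (by simp [ht])

lemma pminus_apply {n a : ℕ} (f : V (n+1) (a+1)) (t : BS n a)
    (s : BS (n+1) (a+1)) (hs : s.1 = insert n t.1) : pminus n a f t = f s := by
  simp only [pminus, LinearMap.coe_mk, AddHom.coe_mk]
  exact Vcongr f (by simp [hs])

lemma pzero_apply {n a : ℕ} (f : V (n+1) a) (t : BS n a)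
    (s : BS (n+1) a) (hs : s.1 = t.1) : pzero n a f t = f s := by
  simp only [pzero, LinearMap.coe_mk, AddHom.coe_mk]
  exact Vcongr f (by simp [hs])
/-! ### The closed-form operators -/

lemma Xp_hm {n a : ℕ} (i : ℕ) : ∀ s : BS n a, (i ∈ s.1 ∧ i - 1 ∉ s.1) →
    (insert (i-1) (s.1.erase i) ⊆ Finset.range n ∧ (insert (i-1) (s.1.erase i)).card = a) := by
  rintro s ⟨h1, h2⟩
  have hi : i < n := BS.mem_lt s h1
  have hcard : 0 < s.1.card := Finset.card_pos.mpr ⟨i, h1⟩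
  constructor
  · intro x hx
    rcases Finset.mem_insert.mp hx with rfl | hx
    · simp only [Finset.mem_range]; omega
    · exact s.2.1 (Finset.mem_of_mem_erase hx)
  · rw [Finset.card_insert_of_notMem (fun hc => h2 (Finset.mem_of_mem_erase hc)),
      Finset.card_erase_of_mem h1, s.2.2]
    rw [s.2.2] at hcard
    omega

lemma Xm_hm {n a : ℕ} (i : ℕ) : ∀ s : BS n a, (i - 1 ∈ s.1 ∧ i ∉ s.1 ∧ i < n) →
    (insert i (s.1.erase (i-1)) ⊆ Finset.range n ∧ (insert i (s.1.erase (i-1))).card = a) := by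
  rintro s ⟨h1, h2, h3⟩
  have hcard : 0 < s.1.card := Finset.card_pos.mpr ⟨i-1, h1⟩
  constructor
  · intro x hx
    rcases Finset.mem_insert.mp hx with rfl | hx
    · simp only [Finset.mem_range]; omega
    · exact s.2.1 (Finset.mem_of_mem_erase hx)
  · rw [Finset.card_insert_of_notMem (fun hc => h2 (Finset.mem_of_mem_erase hc)),
      Finset.card_erase_of_mem h1, s.2.2]
    rw [s.2.2] at hcard
    omega

lemma id_hm {n a : ℕ} (P : Finset ℕ → Prop) : ∀ s : BS n a, P s.1 →
    ((fun t => t) s.1 ⊆ Finset.range n ∧ ((fun t => t) s.1).card = a) := fun s _ => s.2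

/-- Closed form of `X_i^+` on `V_a^n`. -/
noncomputable def XpE (n a i : ℕ) : Module.End A (V n a) :=
  genOp n a (fun t => i ∈ t ∧ i - 1 ∉ t) (fun t => insert (i-1) (t.erase i)) (fun _ => 1)
    (Xp_hm i)

/-- Closed form of `X_i^-` on `V_a^n`. -/
noncomputable def XmE (n a i : ℕ) : Module.End A (V n a) :=
  genOp n a (fun t => i - 1 ∈ t ∧ i ∉ t ∧ i < n) (fun t => insert i (t.erase (i-1))) (fun _ => 1)
    (Xm_hm i)

/-- The diagonal coefficient of `K_i`. -/
noncomputable def kc (i : ℕ) (t : Finset ℕ) : A :=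
  (if i ∈ t then qq else 1) * (if i - 1 ∈ t then qq⁻¹ else 1)

/-- Closed form of `K_i` on `V_a^n`. -/
noncomputable def KE (n a i : ℕ) : Module.End A (V n a) :=
  genOp n a (fun _ => True) (fun t => t) (kc i) (fun s _ => s.2)

/-- Closed form of `K_i⁻¹` on `V_a^n`. -/
noncomputable def KinvE (n a i : ℕ) : Module.End A (V n a) :=
  genOp n a (fun _ => True) (fun t => t)
    (fun t => (if i ∈ t then qq⁻¹ else 1) * (if i - 1 ∈ t then qq else 1)) (fun s _ => s.2)

/-! ### The glue lemma -/

/-- The master recursion compatibility ("glue") lemma: an operator defined uniformly by a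
conditioned move commutes with the decomposition `V_a^n = V_{a-1}^{n-1} ⊕ V_a^{n-1}`. -/
lemma genOp_glue {n a : ℕ} (P m c hm₁ hm₂ P' m' c' hm')
    (hP₁ : ∀ t : Finset ℕ, n+1 ∉ t → (P' (insert (n+1) t) ↔ P t))
    (hP₂ : ∀ t : Finset ℕ, t ⊆ Finset.range (n+1) → (P' t ↔ P t))
    (hm : ∀ t : Finset ℕ, n+1 ∉ t → P t → m' (insert (n+1) t) = insert (n+1) (m t) ∧ n+1 ∉ m t)
    (hmeq : ∀ t : Finset ℕ, t ⊆ Finset.range (n+1) → P t → m' t = m t)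
    (hc₁ : ∀ t : Finset ℕ, n+1 ∉ t → c' (insert (n+1) t) = c t)
    (hc₂ : ∀ t : Finset ℕ, t ⊆ Finset.range (n+1) → c' t = c t) :
    iminus (n+1) a ∘ₗ genOp (n+1) a P m c hm₁ ∘ₗ pminus (n+1) a
    + izero (n+1) (a+1) ∘ₗ genOp (n+1) (a+1) P m c hm₂ ∘ₗ pzero (n+1) (a+1)
    = genOp (n+2) (a+1) P' m' c' hm' := by
  apply LinearMap.ext; intro f; funext s
  simp only [LinearMap.add_apply, LinearMap.comp_apply, Pi.add_apply]
  by_cases hn : n+1 ∈ s.1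
  · -- the `izero` summand vanishes
    have hz : izero (n+1) (a+1) ((genOp (n+1) (a+1) P m c hm₂) (pzero (n+1) (a+1) f)) s = 0 := by
      simp only [izero, LinearMap.coe_mk, AddHom.coe_mk, dif_pos hn]
    rw [hz, add_zero]
    -- the erased element
    have hte : s.1.erase (n+1) ⊆ Finset.range (n+1) ∧ (s.1.erase (n+1)).card = a := by
      constructor
      · intro x hx
        have h1 := (Finset.mem_erase.mp hx).1
        have h2 := BS.mem_lt s (Finset.mem_of_mem_erase hx)
        simp only [Finset.mem_range]; omega
      · rw [Finset.card_erase_of_mem hn, s.2.2]; omega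
    set t : BS (n+1) a := ⟨s.1.erase (n+1), hte.1, hte.2⟩ with htdef
    have hins : insert (n+1) t.1 = s.1 := Finset.insert_erase hn
    have hnt : n+1 ∉ t.1 := Finset.notMem_erase _ _
    rw [iminus_apply_pos _ s hn t rfl]
    by_cases hPt : P t.1
    · have hmov := hm t.1 hnt hPt
      have hmv := hm₁ t hPt
      rw [genOp_apply_pos _ t hPt ⟨m t.1, hmv.1, hmv.2⟩ rfl]
      have hs' : s.1 = insert (n+1) t.1 := hins.symm
      -- evaluate pminus
      have hval : (insert (n+1) (m t.1)) ⊆ Finset.range (n+2) ∧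
          (insert (n+1) (m t.1)).card = a + 1 := by
        constructor
        · intro x hx
          rcases Finset.mem_insert.mp hx with rfl | hx
          · simp only [Finset.mem_range]; omega
          · have := hmv.1 hx; simp only [Finset.mem_range] at this ⊢; omega
        · rw [Finset.card_insert_of_notMem hmov.2, hmv.2]
      rw [pminus_apply _ _ ⟨insert (n+1) (m t.1), hval.1, hval.2⟩ rfl]
      have hPs : P' s.1 := by
        rw [hs']; exact (hP₁ t.1 hnt).mpr hPt
      rw [genOp_apply_pos _ s hPs ⟨insert (n+1) (m t.1), hval.1, hval.2⟩ (by
        rw [hs', hmov.1])]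
      rw [hs', hc₁ t.1 hnt]
    · rw [genOp_apply_neg _ t hPt]
      have hPs : ¬ P' s.1 := by
        rw [← hins]; exact fun hc => hPt ((hP₁ t.1 hnt).mp hc)
      rw [genOp_apply_neg _ s hPs]
  · -- the `iminus` summand vanishes
    rw [iminus_apply_neg _ s hn, zero_add]
    have hts : s.1 ⊆ Finset.range (n+1) ∧ s.1.card = a + 1 := by
      refine ⟨fun x hx => ?_, s.2.2⟩
      have := BS.mem_lt s hx
      have : x ≠ n+1 := fun hc => hn (hc ▸ hx)
      simp only [Finset.mem_range]; omega
    set t : BS (n+1) (a+1) := ⟨s.1, hts.1, hts.2⟩ with htdef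
    rw [izero_apply_pos _ s hn t rfl]
    by_cases hPt : P t.1
    · have hmv := hm₂ t hPt
      rw [genOp_apply_pos _ t hPt ⟨m t.1, hmv.1, hmv.2⟩ rfl]
      have hval : m t.1 ⊆ Finset.range (n+2) ∧ (m t.1).card = a + 1 := by
        refine ⟨fun x hx => ?_, hmv.2⟩
        have := hmv.1 hx; simp only [Finset.mem_range] at this ⊢; omega
      rw [pzero_apply _ _ ⟨m t.1, hval.1, hval.2⟩ rfl]
      have hPs : P' s.1 := (hP₂ s.1 hts.1).mpr hPt
      rw [genOp_apply_pos _ s hPs ⟨m t.1, hval.1, hval.2⟩ (hmeq s.1 hts.1 hPt).symm]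
      rw [hc₂ s.1 hts.1]
    · rw [genOp_apply_neg _ t hPt]
      have hPs : ¬ P' s.1 := fun hc => hPt ((hP₂ s.1 hts.1).mp hc)
      rw [genOp_apply_neg _ s hPs]
/-! ### Identification of the recursive operators with their closed forms -/

lemma diagOp_apply {n a m : ℕ} (x y : A) (f : V n a) (s : BS n a) :
    diagOp n a m x y f s = (if m ∈ s.1 then x else y) * f s := rfl

lemma BS.card_pos {n a : ℕ} (s : BS n a) {x : ℕ} (hx : x ∈ s.1) : 1 ≤ a := by
  have := Finset.card_pos.mpr ⟨x, hx⟩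
  rw [s.2.2] at this
  omega

lemma XpE_a0 (n i : ℕ) : XpE n 0 i = 0 := by
  refine genOp_eq_zero (fun s hc => ?_)
  have : s.1 = ∅ := Finset.card_eq_zero.mp s.2.2
  rw [this] at hc
  exact absurd hc.1 (Finset.notMem_empty i)

lemma XmE_a0 (n i : ℕ) : XmE n 0 i = 0 := by
  refine genOp_eq_zero (fun s hc => ?_)
  have : s.1 = ∅ := Finset.card_eq_zero.mp s.2.2
  rw [this] at hc
  exact absurd hc.1 (Finset.notMem_empty _)

lemma KE_a0 (n i : ℕ) : KE n 0 i = 1 := by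
  refine genOp_eq_one (fun _ => trivial) (fun s => ?_)
  have : s.1 = ∅ := Finset.card_eq_zero.mp s.2.2
  simp [this, kc]

lemma KinvE_a0 (n i : ℕ) : KinvE n 0 i = 1 := by
  refine genOp_eq_one (fun _ => trivial) (fun s => ?_)
  have : s.1 = ∅ := Finset.card_eq_zero.mp s.2.2
  simp [this]

lemma BS.full {n : ℕ} (s : BS n n) : s.1 = Finset.range n :=
  Finset.eq_of_subset_of_card_le s.2.1 (by rw [s.2.2, Finset.card_range])

lemma XpE_an (n i : ℕ) (h1 : 1 ≤ i) : XpE n n i = 0 := by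
  refine genOp_eq_zero (fun s hc => ?_)
  rw [BS.full s] at hc
  obtain ⟨hi, hi'⟩ := hc
  rw [Finset.mem_range] at hi
  exact hi' (Finset.mem_range.mpr (by omega))

lemma XmE_an (n i : ℕ) : XmE n n i = 0 := by
  refine genOp_eq_zero (fun s hc => ?_)
  rw [BS.full s] at hc
  exact hc.2.1 (Finset.mem_range.mpr hc.2.2)

lemma KE_an (n i : ℕ) (h1 : 1 ≤ i) (h2 : i + 1 ≤ n) : KE n n i = 1 := by
  refine genOp_eq_one (fun _ => trivial) (fun s => ?_)
  refine ⟨rfl, ?_⟩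
  rw [BS.full s]
  simp only [kc, Finset.mem_range]
  rw [if_pos (by omega), if_pos (by omega)]
  exact mul_inv_cancel₀ qq_ne_zero

lemma KinvE_an (n i : ℕ) (h1 : 1 ≤ i) (h2 : i + 1 ≤ n) : KinvE n n i = 1 := by
  refine genOp_eq_one (fun _ => trivial) (fun s => ?_)
  refine ⟨rfl, ?_⟩
  rw [BS.full s]
  simp only [Finset.mem_range]
  rw [if_pos (by omega), if_pos (by omega)]
  exact inv_mul_cancel₀ qq_ne_zero
/-! ### Top-index cases -/

lemma erase_top_proofs {n a : ℕ} (s : BS (n+2) (a+1)) (h1 : n+1 ∈ s.1) :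
    s.1.erase (n+1) ⊆ Finset.range (n+1) ∧ (s.1.erase (n+1)).card = a := by
  constructor
  · intro x hx
    have hne := (Finset.mem_erase.mp hx).1
    have hlt := BS.mem_lt s (Finset.mem_of_mem_erase hx)
    simp only [Finset.mem_range]; omega
  · rw [Finset.card_erase_of_mem h1, s.2.2]; omega

lemma sub_top_proofs {n a : ℕ} (s : BS (n+2) (a+1)) (h1 : n+1 ∉ s.1) :
    s.1 ⊆ Finset.range (n+1) ∧ s.1.card = a + 1 := by
  refine ⟨fun x hx => ?_, s.2.2⟩
  have hlt := BS.mem_lt s hx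
  have : x ≠ n+1 := fun hc => h1 (hc ▸ hx)
  simp only [Finset.mem_range]; omega

lemma Xp_top (n a : ℕ) :
    (iminus (n+1) a) ∘ₗ (izero n a) ∘ₗ (pminus n a) ∘ₗ (pzero (n+1) (a+1))
      = XpE (n+2) (a+1) (n+1) := by
  apply LinearMap.ext; intro f; funext s
  simp only [LinearMap.comp_apply, XpE, Nat.add_sub_cancel]
  by_cases h1 : n+1 ∈ s.1
  · have hte := erase_top_proofs s h1
    set t : BS (n+1) a := ⟨s.1.erase (n+1), hte.1, hte.2⟩ with htdef
    rw [iminus_apply_pos _ s h1 t rfl]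
    by_cases h2 : n ∈ s.1
    · have h2t : n ∈ t.1 := Finset.mem_erase.mpr ⟨by omega, h2⟩
      rw [izero_apply_neg _ t h2t, genOp_apply_neg _ s (fun hc => hc.2 h2)]
    · have h2t : n ∉ t.1 := fun hc => h2 (Finset.mem_of_mem_erase hc)
      have hu : t.1 ⊆ Finset.range n ∧ t.1.card = a := by
        refine ⟨fun x hx => ?_, hte.2⟩
        have := hte.1 hx
        have : x ≠ n := fun hc => h2t (hc ▸ hx)
        simp only [Finset.mem_range] at *; omega
      set u : BS n a := ⟨t.1, hu.1, hu.2⟩ with hudef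
      rw [izero_apply_pos _ t h2t u rfl]
      have hw : insert n u.1 ⊆ Finset.range (n+1) ∧ (insert n u.1).card = a + 1 := by
        constructor
        · intro x hx
          rcases Finset.mem_insert.mp hx with rfl | hx
          · simp
          · have := hu.1 hx; simp only [Finset.mem_range] at *; omega
        · rw [Finset.card_insert_of_notMem (fun hc => h2t hc), hu.2]
      set w : BS (n+1) (a+1) := ⟨insert n u.1, hw.1, hw.2⟩ with hwdef
      rw [pminus_apply _ u w rfl]
      have hw' : insert n u.1 ⊆ Finset.range (n+2) ∧ (insert n u.1).card = a + 1 := by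
        refine ⟨fun x hx => ?_, hw.2⟩
        have := hw.1 hx; simp only [Finset.mem_range] at *; omega
      set w' : BS (n+2) (a+1) := ⟨insert n u.1, hw'.1, hw'.2⟩ with hw'def
      rw [pzero_apply _ w w' rfl]
      rw [genOp_apply_pos _ s ⟨h1, h2⟩ w' rfl, one_mul]
  · rw [iminus_apply_neg _ s h1, genOp_apply_neg _ s (fun hc => h1 hc.1)]

lemma Xm_top (n a : ℕ) :
    (izero (n+1) (a+1)) ∘ₗ (iminus n a) ∘ₗ (pzero n a) ∘ₗ (pminus (n+1) a)
      = XmE (n+2) (a+1) (n+1) := by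
  apply LinearMap.ext; intro f; funext s
  simp only [LinearMap.comp_apply, XmE, Nat.add_sub_cancel]
  by_cases h1 : n+1 ∈ s.1
  · rw [izero_apply_neg _ s h1, genOp_apply_neg _ s (fun hc => hc.2.1 h1)]
  · have hts := sub_top_proofs s h1
    set t : BS (n+1) (a+1) := ⟨s.1, hts.1, hts.2⟩ with htdef
    rw [izero_apply_pos _ s h1 t rfl]
    by_cases h2 : n ∈ s.1
    · have h2t : n ∈ t.1 := h2
      have hu : t.1.erase n ⊆ Finset.range n ∧ (t.1.erase n).card = a := by
        constructor
        · intro x hx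
          have hne := (Finset.mem_erase.mp hx).1
          have := hts.1 (Finset.mem_of_mem_erase hx)
          simp only [Finset.mem_range] at *; omega
        · rw [Finset.card_erase_of_mem h2t, hts.2]; omega
      set u : BS n a := ⟨t.1.erase n, hu.1, hu.2⟩ with hudef
      rw [iminus_apply_pos _ t h2t u rfl]
      have hu' : u.1 ⊆ Finset.range (n+1) ∧ u.1.card = a := by
        refine ⟨fun x hx => ?_, hu.2⟩
        have := hu.1 hx; simp only [Finset.mem_range] at *; omega
      set u' : BS (n+1) a := ⟨u.1, hu'.1, hu'.2⟩ with hu'def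
      rw [pzero_apply _ u u' rfl]
      have hw : insert (n+1) u'.1 ⊆ Finset.range (n+2) ∧ (insert (n+1) u'.1).card = a + 1 := by
        constructor
        · intro x hx
          rcases Finset.mem_insert.mp hx with rfl | hx
          · simp
          · have := hu'.1 hx; simp only [Finset.mem_range] at *; omega
        · rw [Finset.card_insert_of_notMem
            (fun hc => h1 (Finset.mem_of_mem_erase hc)), hu'.2]
      set w : BS (n+2) (a+1) := ⟨insert (n+1) u'.1, hw.1, hw.2⟩ with hwdef
      rw [pminus_apply _ u' w rfl]
      rw [genOp_apply_pos _ s ⟨h2, h1, by omega⟩ w rfl, one_mul]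
    · rw [iminus_apply_neg _ t (by exact h2 : n ∉ t.1),
        genOp_apply_neg _ s (fun hc => h2 hc.1)]

lemma K_top (n a : ℕ) :
    (iminus (n+1) a) ∘ₗ (diagOp (n+1) a n 1 qq) ∘ₗ (pminus (n+1) a)
      + (izero (n+1) (a+1)) ∘ₗ (diagOp (n+1) (a+1) n qq⁻¹ 1) ∘ₗ (pzero (n+1) (a+1))
      = KE (n+2) (a+1) (n+1) := by
  apply LinearMap.ext; intro f; funext s
  simp only [LinearMap.add_apply, LinearMap.comp_apply, Pi.add_apply, KE, kc, Nat.add_sub_cancel]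
  rw [genOp_apply_pos (hm := fun s _ => s.2) f s trivial s rfl]
  simp only [kc, Nat.add_sub_cancel]
  by_cases h1 : n+1 ∈ s.1
  · rw [izero_apply_neg _ s h1, add_zero]
    have hte := erase_top_proofs s h1
    set t : BS (n+1) a := ⟨s.1.erase (n+1), hte.1, hte.2⟩ with htdef
    rw [iminus_apply_pos _ s h1 t rfl, diagOp_apply,
      pminus_apply _ t s (Finset.insert_erase h1).symm]
    have hmem : n ∈ t.1 ↔ n ∈ s.1 := by
      simp [htdef, Finset.mem_erase]
    simp only [if_pos h1]
    by_cases h2 : n ∈ s.1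
    · rw [if_pos (hmem.mpr h2), if_pos h2, mul_inv_cancel₀ qq_ne_zero, one_mul]
    · rw [if_neg (fun hc => h2 (hmem.mp hc)), if_neg h2, mul_one]
  · rw [iminus_apply_neg _ s h1, zero_add]
    have hts := sub_top_proofs s h1
    set t : BS (n+1) (a+1) := ⟨s.1, hts.1, hts.2⟩ with htdef
    rw [izero_apply_pos _ s h1 t rfl, diagOp_apply, pzero_apply _ t s rfl]
    simp only [if_neg h1, one_mul]
    rfl

lemma Kinv_top (n a : ℕ) :
    (iminus (n+1) a) ∘ₗ (diagOp (n+1) a n 1 qq⁻¹) ∘ₗ (pminus (n+1) a)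
      + (izero (n+1) (a+1)) ∘ₗ (diagOp (n+1) (a+1) n qq 1) ∘ₗ (pzero (n+1) (a+1))
      = KinvE (n+2) (a+1) (n+1) := by
  apply LinearMap.ext; intro f; funext s
  simp only [LinearMap.add_apply, LinearMap.comp_apply, Pi.add_apply, KinvE, Nat.add_sub_cancel]
  rw [genOp_apply_pos (hm := fun s _ => s.2) f s trivial s rfl]
  skip
  by_cases h1 : n+1 ∈ s.1
  · rw [izero_apply_neg _ s h1, add_zero]
    have hte := erase_top_proofs s h1
    set t : BS (n+1) a := ⟨s.1.erase (n+1), hte.1, hte.2⟩ with htdef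
    rw [iminus_apply_pos _ s h1 t rfl, diagOp_apply,
      pminus_apply _ t s (Finset.insert_erase h1).symm]
    have hmem : n ∈ t.1 ↔ n ∈ s.1 := by
      simp [htdef, Finset.mem_erase]
    simp only [if_pos h1]
    by_cases h2 : n ∈ s.1
    · rw [if_pos (hmem.mpr h2), if_pos h2, inv_mul_cancel₀ qq_ne_zero, one_mul]
    · rw [if_neg (fun hc => h2 (hmem.mp hc)), if_neg h2, mul_one]
  · rw [iminus_apply_neg _ s h1, zero_add]
    have hts := sub_top_proofs s h1
    set t : BS (n+1) (a+1) := ⟨s.1, hts.1, hts.2⟩ with htdef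
    rw [izero_apply_pos _ s h1 t rfl, diagOp_apply, pzero_apply _ t s rfl]
    simp only [if_neg h1, one_mul]
    rfl
/-! ### Glue instantiations -/

lemma XpE_glue (k b i : ℕ) (h1 : 1 ≤ i) (h2 : i ≤ k) :
    iminus (k+1) b ∘ₗ XpE (k+1) b i ∘ₗ pminus (k+1) b
    + izero (k+1) (b+1) ∘ₗ XpE (k+1) (b+1) i ∘ₗ pzero (k+1) (b+1)
    = XpE (k+2) (b+1) i := by
  refine genOp_glue _ _ _ _ _ _ _ _ _ ?_ (fun t _ => Iff.rfl) ?_ (fun t _ _ => rfl)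
    (fun t _ => rfl) (fun t _ => rfl)
  · intro t ht
    have hik : i ≠ k+1 := by omega
    have hik' : i - 1 ≠ k+1 := by omega
    simp [Finset.mem_insert, hik, hik']
  · intro t ht hP
    constructor
    · ext x
      by_cases hx : x ∈ t
      · have hxk : x ≠ k+1 := fun h => ht (h ▸ hx)
        simp only [Finset.mem_insert, Finset.mem_erase, hx, or_true, and_true]
        omega
      · simp only [Finset.mem_insert, Finset.mem_erase, hx, or_false, and_false]
        omega
    · simp only [Finset.mem_insert, Finset.mem_erase, not_or, not_and]
      exact ⟨by omega, fun _ h => absurd h ht⟩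

lemma XmE_glue (k b i : ℕ) (h1 : 1 ≤ i) (h2 : i ≤ k) :
    iminus (k+1) b ∘ₗ XmE (k+1) b i ∘ₗ pminus (k+1) b
    + izero (k+1) (b+1) ∘ₗ XmE (k+1) (b+1) i ∘ₗ pzero (k+1) (b+1)
    = XmE (k+2) (b+1) i := by
  refine genOp_glue _ _ _ _ _ _ _ _ _ ?_ ?_ ?_ (fun t _ _ => rfl)
    (fun t _ => rfl) (fun t _ => rfl)
  · intro t ht
    have hik : i ≠ k+1 := by omega
    have hik' : i - 1 ≠ k+1 := by omega
    simp only [Finset.mem_insert, not_or]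
    constructor
    · rintro ⟨a1, a2, _⟩
      exact ⟨a1.resolve_left (by omega), a2.2, by omega⟩
    · rintro ⟨a1, a2, _⟩
      exact ⟨Or.inr a1, ⟨by omega, a2⟩, by omega⟩
  · intro t _
    constructor
    · rintro ⟨a1, a2, _⟩; exact ⟨a1, a2, by omega⟩
    · rintro ⟨a1, a2, _⟩; exact ⟨a1, a2, by omega⟩
  · intro t ht hP
    constructor
    · ext x
      by_cases hx : x ∈ t
      · have hxk : x ≠ k+1 := fun h => ht (h ▸ hx)
        simp only [Finset.mem_insert, Finset.mem_erase, hx, or_true, and_true]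
        omega
      · simp only [Finset.mem_insert, Finset.mem_erase, hx, or_false, and_false]
        omega
    · simp only [Finset.mem_insert, Finset.mem_erase, not_or, not_and]
      exact ⟨by omega, fun _ h => absurd h ht⟩

lemma KE_glue (k b i : ℕ) (h1 : 1 ≤ i) (h2 : i ≤ k) :
    iminus (k+1) b ∘ₗ KE (k+1) b i ∘ₗ pminus (k+1) b
    + izero (k+1) (b+1) ∘ₗ KE (k+1) (b+1) i ∘ₗ pzero (k+1) (b+1)
    = KE (k+2) (b+1) i := by
  refine genOp_glue _ _ _ _ _ _ _ _ _ (fun t _ => Iff.rfl) (fun t _ => Iff.rfl)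
    (fun t ht _ => ⟨rfl, ht⟩) (fun t _ _ => rfl) ?_ (fun t _ => rfl)
  intro t ht
  have hik : i ≠ k+1 := by omega
  have hik' : i - 1 ≠ k+1 := by omega
  simp [kc, Finset.mem_insert, hik, hik']

lemma KinvE_glue (k b i : ℕ) (h1 : 1 ≤ i) (h2 : i ≤ k) :
    iminus (k+1) b ∘ₗ KinvE (k+1) b i ∘ₗ pminus (k+1) b
    + izero (k+1) (b+1) ∘ₗ KinvE (k+1) (b+1) i ∘ₗ pzero (k+1) (b+1)
    = KinvE (k+2) (b+1) i := by
  refine genOp_glue _ _ _ _ _ _ _ _ _ (fun t _ => Iff.rfl) (fun t _ => Iff.rfl)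
    (fun t ht _ => ⟨rfl, ht⟩) (fun t _ _ => rfl) ?_ (fun t _ => rfl)
  intro t ht
  have hik : i ≠ k+1 := by omega
  have hik' : i - 1 ≠ k+1 := by omega
  simp [Finset.mem_insert, hik, hik']

/-! ### The identification -/

lemma ops_eq : ∀ n a i, 1 ≤ i → i + 1 ≤ n →
    XpOp n a i = XpE n a i ∧ XmOp n a i = XmE n a i ∧
    KOp n a i = KE n a i ∧ KinvOp n a i = KinvE n a i := by
  intro n
  induction n with
  | zero => intro a i hi hin; omega
  | succ m ih =>
    intro a i hi hin
    match m, a with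
    | 0, a => omega
    | k+1, 0 =>
      exact ⟨by simp only [XpOp]; rw [XpE_a0], by simp only [XmOp]; rw [XmE_a0],
        by simp only [KOp]; rw [KE_a0], by simp only [KinvOp]; rw [KinvE_a0]⟩
    | k+1, b+1 =>
      by_cases hab : b + 1 = k + 2
      · have hb : b = k+1 := by omega
        subst hb
        refine ⟨?_, ?_, ?_, ?_⟩
        · simp only [XpOp]; rw [if_pos trivial, XpE_an _ _ hi]
        · simp only [XmOp]; rw [if_pos trivial, XmE_an]
        · simp only [KOp]; rw [if_pos trivial, KE_an _ _ hi hin]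
        · simp only [KinvOp]; rw [if_pos trivial, KinvE_an _ _ hi hin]
      · by_cases hik : i = k + 1
        · subst hik
          refine ⟨?_, ?_, ?_, ?_⟩
          · simp only [XpOp]; rw [if_neg hab, if_pos trivial]; exact Xp_top k b
          · simp only [XmOp]; rw [if_neg hab, if_pos trivial]; exact Xm_top k b
          · simp only [KOp]; rw [if_neg hab, if_pos trivial]; exact K_top k b
          · simp only [KinvOp]; rw [if_neg hab, if_pos trivial]; exact Kinv_top k b
        · have h2k : i ≤ k := by omega
          obtain ⟨ep, em, ek, ekv⟩ := ih b i hi (by omega)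
          obtain ⟨ep', em', ek', ekv'⟩ := ih (b+1) i hi (by omega)
          refine ⟨?_, ?_, ?_, ?_⟩
          · simp only [XpOp]; rw [if_neg hab, if_neg hik, ep, ep']; exact XpE_glue k b i hi h2k
          · simp only [XmOp]; rw [if_neg hab, if_neg hik, em, em']; exact XmE_glue k b i hi h2k
          · simp only [KOp]; rw [if_neg hab, if_neg hik, ek, ek']; exact KE_glue k b i hi h2k
          · simp only [KinvOp]; rw [if_neg hab, if_neg hik, ekv, ekv']
            exact KinvE_glue k b i hi h2k
/-! ### Scalar helper lemmas -/

lemma q_sub_qinv_ne : qq - qq⁻¹ ≠ 0 := by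
  intro h
  have h1 : qq = qq⁻¹ := by linear_combination h
  have h2 : qq * qq = 1 := by
    rw [mul_comm]; nth_rewrite 2 [h1]; exact mul_inv_cancel₀ qq_ne_zero
  have h3 : (Polynomial.X * Polynomial.X : Polynomial ℚ) = 1 := by
    apply RatFunc.algebraMap_injective ℚ
    rw [map_mul, map_one, RatFunc.algebraMap_X]
    exact h2
  have h4 := congrArg (Polynomial.eval 2) h3
  norm_num at h4

/-- The `K_i`-weight of a subset, as an integer. -/
def kz (i : ℕ) (t : Finset ℕ) : ℤ :=
  (if i ∈ t then 1 else 0) - (if i - 1 ∈ t then 1 else 0)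

lemma kc_eq (i : ℕ) (t : Finset ℕ) : kc i t = qq ^ kz i t := by
  unfold kc kz
  by_cases hA : i ∈ t <;> by_cases hB : i - 1 ∈ t <;>
    simp [hA, hB, mul_inv_cancel₀ qq_ne_zero]

lemma kcinv_eq (i : ℕ) (t : Finset ℕ) :
    (if i ∈ t then qq⁻¹ else 1) * (if i - 1 ∈ t then qq else 1) = qq ^ (- kz i t) := by
  unfold kz
  by_cases hA : i ∈ t <;> by_cases hB : i - 1 ∈ t <;>
    simp [hA, hB, inv_mul_cancel₀ qq_ne_zero]

lemma kmem (x j : ℕ) (t : Finset ℕ) :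
    x ∈ insert (j-1) (t.erase j) ↔ (x = j - 1 ∨ (x ≠ j ∧ x ∈ t)) := by
  simp [Finset.mem_insert, Finset.mem_erase]

lemma kmem' (x j : ℕ) (t : Finset ℕ) :
    x ∈ insert j (t.erase (j-1)) ↔ (x = j ∨ (x ≠ j - 1 ∧ x ∈ t)) := by
  simp [Finset.mem_insert, Finset.mem_erase]

lemma kz_move (i j : ℕ) (hi : 1 ≤ i) (hj : 1 ≤ j) {t : Finset ℕ}
    (h1 : j ∈ t) (h2 : j - 1 ∉ t) :
    kz i t = cartN i j + kz i (insert (j-1) (t.erase j)) := by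
  simp only [kz, cartN, kmem]
  by_cases hA : i ∈ t <;> by_cases hB : i - 1 ∈ t
  · have e1 : i ≠ j - 1 := fun h => h2 (h ▸ hA)
    have e2 : i - 1 ≠ j - 1 := fun h => h2 (h ▸ hB)
    simp only [hA, hB, if_true, if_false, and_true, and_false, or_false, or_true, not_true, not_false_iff]; split_ifs <;> omega
  · have e1 : i ≠ j - 1 := fun h => h2 (h ▸ hA)
    have e2 : i - 1 ≠ j := fun h => hB (h.symm ▸ h1)
    simp only [hA, hB, if_true, if_false, and_true, and_false, or_false, or_true, not_true, not_false_iff]; split_ifs <;> omega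
  · have e1 : i ≠ j := fun h => hA (h.symm ▸ h1)
    have e2 : i - 1 ≠ j - 1 := fun h => h2 (h ▸ hB)
    simp only [hA, hB, if_true, if_false, and_true, and_false, or_false, or_true, not_true, not_false_iff]; split_ifs <;> omega
  · have e1 : i ≠ j := fun h => hA (h.symm ▸ h1)
    have e2 : i - 1 ≠ j := fun h => hB (h.symm ▸ h1)
    simp only [hA, hB, if_true, if_false, and_true, and_false, or_false, or_true, not_true, not_false_iff]; split_ifs <;> omega

lemma kz_move' (i j : ℕ) (hi : 1 ≤ i) (hj : 1 ≤ j) {t : Finset ℕ}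
    (h1 : j - 1 ∈ t) (h2 : j ∉ t) :
    kz i t = - cartN i j + kz i (insert j (t.erase (j-1))) := by
  simp only [kz, cartN, kmem']
  by_cases hA : i ∈ t <;> by_cases hB : i - 1 ∈ t
  · have e1 : i ≠ j := fun h => h2 (h ▸ hA)
    have e2 : i - 1 ≠ j := fun h => h2 (h ▸ hB)
    simp only [hA, hB, if_true, if_false, and_true, and_false, or_false, or_true, not_true, not_false_iff]; split_ifs <;> omega
  · have e1 : i ≠ j := fun h => h2 (h ▸ hA)
    have e2 : i - 1 ≠ j - 1 := fun h => hB (h.symm ▸ h1)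
    simp only [hA, hB, if_true, if_false, and_true, and_false, or_false, or_true, not_true, not_false_iff]; split_ifs <;> omega
  · have e1 : i ≠ j - 1 := fun h => hA (h.symm ▸ h1)
    have e2 : i - 1 ≠ j := fun h => h2 (h ▸ hB)
    simp only [hA, hB, if_true, if_false, and_true, and_false, or_false, or_true, not_true, not_false_iff]; split_ifs <;> omega
  · have e1 : i ≠ j - 1 := fun h => hA (h.symm ▸ h1)
    have e2 : i - 1 ≠ j - 1 := fun h => hB (h.symm ▸ h1)
    simp only [hA, hB, if_true, if_false, and_true, and_false, or_false, or_true, not_true, not_false_iff]; split_ifs <;> omega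

/-! ### The relations for the closed forms: `K` relations -/

lemma KE_mul_KinvE (n a i : ℕ) : KE n a i * KinvE n a i = 1 := by
  rw [KE, KinvE, genOp_mul]
  refine genOp_eq_one (fun s => ⟨trivial, trivial⟩) (fun s => ⟨rfl, ?_⟩)
  show kc i s.1 * _ = 1
  rw [kc_eq, kcinv_eq, ← zpow_add₀ qq_ne_zero]
  simp

lemma KinvE_mul_KE (n a i : ℕ) : KinvE n a i * KE n a i = 1 := by
  rw [KE, KinvE, genOp_mul]
  refine genOp_eq_one (fun s => ⟨trivial, trivial⟩) (fun s => ⟨rfl, ?_⟩)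
  show _ * kc i s.1 = 1
  rw [kc_eq, kcinv_eq, ← zpow_add₀ qq_ne_zero]
  simp

lemma KE_comm (n a i j : ℕ) : KE n a i * KE n a j = KE n a j * KE n a i := by
  rw [KE, KE, genOp_mul, genOp_mul]
  exact genOp_congr (fun s => Iff.rfl) (fun s _ => ⟨rfl, mul_comm _ _⟩)

lemma KE_mul_XpE (n a i j : ℕ) (hi : 1 ≤ i) (hj : 1 ≤ j) :
    KE n a i * XpE n a j = qq ^ (cartN i j) • (XpE n a j * KE n a i) := by
  rw [KE, XpE, genOp_mul, genOp_mul, smul_genOp]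
  refine genOp_congr (fun s => ?_) (fun s hP => ⟨rfl, ?_⟩)
  · exact ⟨fun h => ⟨h.2, trivial⟩, fun h => ⟨trivial, h.1⟩⟩
  · show kc i s.1 * 1 = qq ^ (cartN i j) * (1 * kc i _)
    rw [mul_one, one_mul, kc_eq, kc_eq, kz_move i j hi hj hP.2.1 hP.2.2,
      zpow_add₀ qq_ne_zero]

lemma KE_mul_XmE (n a i j : ℕ) (hi : 1 ≤ i) (hj : 1 ≤ j) :
    KE n a i * XmE n a j = qq ^ (-(cartN i j)) • (XmE n a j * KE n a i) := by
  rw [KE, XmE, genOp_mul, genOp_mul, smul_genOp]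
  refine genOp_congr (fun s => ?_) (fun s hP => ⟨rfl, ?_⟩)
  · exact ⟨fun h => ⟨h.2, trivial⟩, fun h => ⟨trivial, h.1⟩⟩
  · show kc i s.1 * 1 = qq ^ (-(cartN i j)) * (1 * kc i _)
    rw [mul_one, one_mul, kc_eq, kc_eq, kz_move' i j hi hj hP.2.1 hP.2.2.1,
      zpow_add₀ qq_ne_zero]

lemma KE_apply (n a i : ℕ) (f : V n a) (s : BS n a) :
    KE n a i f s = qq ^ (kz i s.1) * f s := by
  rw [KE, genOp_apply_pos _ s trivial s rfl]
  exact congrArg (· * f s) (kc_eq i s.1)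

lemma KinvE_apply (n a i : ℕ) (f : V n a) (s : BS n a) :
    KinvE n a i f s = qq ^ (- kz i s.1) * f s := by
  rw [KinvE, genOp_apply_pos _ s trivial s rfl]
  exact congrArg (· * f s) (kcinv_eq i s.1)
/-! ### The `X` relations for the closed forms -/

lemma move_back1 {i : ℕ} (hi : 1 ≤ i) {t : Finset ℕ} (h1 : i ∈ t) (h2 : i - 1 ∉ t) :
    insert i ((insert (i-1) (t.erase i)).erase (i-1)) = t := by
  ext x
  by_cases hx : x ∈ t
  · have e1 : x ≠ i - 1 := fun h => h2 (h ▸ hx)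
    simp only [Finset.mem_insert, Finset.mem_erase, hx, and_true, or_true, true_and, iff_true]
    omega
  · have e1 : x ≠ i := fun h => hx (h ▸ h1)
    simp only [Finset.mem_insert, Finset.mem_erase, hx, and_false, or_false, iff_false]
    omega

lemma move_back2 {i : ℕ} (hi : 1 ≤ i) {t : Finset ℕ} (h1 : i - 1 ∈ t) (h2 : i ∉ t) :
    insert (i-1) ((insert i (t.erase (i-1))).erase i) = t := by
  ext x
  by_cases hx : x ∈ t
  · have e1 : x ≠ i := fun h => h2 (h ▸ hx)
    simp only [Finset.mem_insert, Finset.mem_erase, hx, and_true, or_true, true_and, iff_true]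
    omega
  · have e1 : x ≠ i - 1 := fun h => hx (h ▸ h1)
    simp only [Finset.mem_insert, Finset.mem_erase, hx, and_false, or_false, iff_false]
    omega

lemma sl2E (n a i : ℕ) (hi : 1 ≤ i) (hin : i + 1 ≤ n) :
    XpE n a i * XmE n a i - XmE n a i * XpE n a i
      = (qq - qq⁻¹)⁻¹ • (KE n a i - KinvE n a i) := by
  have hq := qq_ne_zero
  have hqs := q_sub_qinv_ne
  apply LinearMap.ext; intro f; funext s
  simp only [LinearMap.sub_apply, Pi.sub_apply, LinearMap.smul_apply, Pi.smul_apply,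
    smul_eq_mul]
  rw [KE_apply, KinvE_apply, XpE, XmE, genOp_mul, genOp_mul]
  by_cases h1 : i ∈ s.1 <;> by_cases h2 : i - 1 ∈ s.1
  · rw [genOp_apply_neg _ s (fun hc => hc.1.2 h2),
      genOp_apply_neg _ s (fun hc => hc.1.2.1 h1)]
    have hz : kz i s.1 = 0 := by simp [kz, h1, h2]
    rw [hz]
    simp
  · have hcond : (i ∈ s.1 ∧ i - 1 ∉ s.1) ∧
        (i - 1 ∈ insert (i-1) (s.1.erase i) ∧ i ∉ insert (i-1) (s.1.erase i) ∧ i < n) := by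
      refine ⟨⟨h1, h2⟩, Finset.mem_insert_self _ _, ?_, by omega⟩
      simp only [Finset.mem_insert, Finset.mem_erase, not_or]
      exact ⟨by omega, fun hc => hc.1 rfl⟩
    rw [genOp_apply_pos _ s hcond s (move_back1 hi h1 h2).symm,
      genOp_apply_neg _ s (fun hc => h2 hc.1.1)]
    have hz : kz i s.1 = 1 := by simp [kz, h1, h2]
    rw [hz, zpow_one, show qq ^ (-(1:ℤ)) = qq⁻¹ from zpow_neg_one qq]
    simp only [one_mul, mul_one, sub_zero]
    linear_combination (-(f s)) * inv_mul_cancel₀ hqs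
  · have hcond : (i - 1 ∈ s.1 ∧ i ∉ s.1 ∧ i < n) ∧
        (i ∈ insert i (s.1.erase (i-1)) ∧ i - 1 ∉ insert i (s.1.erase (i-1))) := by
      refine ⟨⟨h2, h1, by omega⟩, Finset.mem_insert_self _ _, ?_⟩
      simp only [Finset.mem_insert, Finset.mem_erase, not_or]
      exact ⟨by omega, fun hc => hc.1 rfl⟩
    rw [genOp_apply_neg _ s (fun hc => h1 hc.1.1),
      genOp_apply_pos _ s hcond s (move_back2 hi h2 h1).symm]
    have hz : kz i s.1 = -1 := by simp [kz, h1, h2]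
    rw [hz, show qq ^ (-1:ℤ) = qq⁻¹ from zpow_neg_one qq,
      show -(-1:ℤ) = 1 by norm_num, zpow_one]
    simp only [one_mul, mul_one, zero_sub]
    linear_combination (f s) * inv_mul_cancel₀ hqs
  · rw [genOp_apply_neg _ s (fun hc => h1 hc.1.1),
      genOp_apply_neg _ s (fun hc => h2 hc.1.1)]
    have hz : kz i s.1 = 0 := by simp [kz, h1, h2]
    rw [hz]
    simp

lemma XpE_XmE_comm (n a i j : ℕ) (hi : 1 ≤ i) (hj : 1 ≤ j) (hij : i ≠ j) :
    XpE n a i * XmE n a j = XmE n a j * XpE n a i := by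
  rw [XpE, XmE, genOp_mul, genOp_mul]
  refine genOp_congr (fun s => ?_) (fun s hP => ⟨?_, rfl⟩)
  · by_cases hA : i ∈ s.1 <;> by_cases hB : i - 1 ∈ s.1 <;> by_cases hC : j ∈ s.1 <;>
      by_cases hD : j - 1 ∈ s.1 <;>
      simp only [Finset.mem_insert, Finset.mem_erase, hA, hB, hC, hD, if_true, if_false,
        and_true, and_false, or_false, or_true, true_and, false_and, not_true,
        not_false_iff, iff_true, iff_false, true_iff, false_iff] <;>
      first
        | rfl
        | omega
        | exact ⟨fun hh => by omega, fun hh => by omega⟩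
  · obtain ⟨⟨p1, p2⟩, p3, p4, _⟩ := hP
    simp only [Finset.mem_insert, Finset.mem_erase] at p3 p4
    have q1 : j - 1 ≠ i ∧ j - 1 ∈ s.1 := p3.resolve_left (by omega)
    push_neg at p4
    have q2 : j ∉ s.1 := p4.2 (fun h => hij h.symm)
    have q3 : j ≠ i - 1 := p4.1
    ext x
    by_cases hx : x ∈ s.1
    · have e1 : x ≠ i - 1 := fun h => p2 (h ▸ hx)
      have e2 : x ≠ j := fun h => q2 (h ▸ hx)
      simp only [Finset.mem_insert, Finset.mem_erase, hx, and_true, or_true, true_and, iff_true]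
      omega
    · have e1 : x ≠ i := fun h => hx (h ▸ p1)
      have e2 : x ≠ j - 1 := fun h => hx (h ▸ q1.2)
      simp only [Finset.mem_insert, Finset.mem_erase, hx, and_false, or_false, iff_false]
      omega

lemma XpE_XpE_comm (n a i j : ℕ) (hi : 1 ≤ i) (hj : 1 ≤ j) (h : i + 2 ≤ j ∨ j + 2 ≤ i) :
    XpE n a i * XpE n a j = XpE n a j * XpE n a i := by
  rw [XpE, XpE, genOp_mul, genOp_mul]
  refine genOp_congr (fun s => ?_) (fun s hP => ⟨?_, rfl⟩)
  · by_cases hA : i ∈ s.1 <;> by_cases hB : i - 1 ∈ s.1 <;> by_cases hC : j ∈ s.1 <;>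
      by_cases hD : j - 1 ∈ s.1 <;>
      simp only [Finset.mem_insert, Finset.mem_erase, hA, hB, hC, hD, if_true, if_false,
        and_true, and_false, or_false, or_true, true_and, false_and, not_true,
        not_false_iff, iff_true, iff_false, true_iff, false_iff] <;>
      first
        | rfl
        | omega
        | exact ⟨fun hh => by omega, fun hh => by omega⟩
  · obtain ⟨⟨p1, p2⟩, p3, p4⟩ := hP
    simp only [Finset.mem_insert, Finset.mem_erase] at p3 p4
    have q1 : j ≠ i ∧ j ∈ s.1 := p3.resolve_left (by omega)
    push_neg at p4
    have q2 : j - 1 ∉ s.1 := p4.2 (by omega)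
    ext x
    by_cases hx : x ∈ s.1
    · have e1 : x ≠ i - 1 := fun h' => p2 (h' ▸ hx)
      have e2 : x ≠ j - 1 := fun h' => q2 (h' ▸ hx)
      simp only [Finset.mem_insert, Finset.mem_erase, hx, and_true, or_true, true_and, iff_true]
      omega
    · have e1 : x ≠ i := fun h' => hx (h' ▸ p1)
      have e2 : x ≠ j := fun h' => hx (h' ▸ q1.2)
      simp only [Finset.mem_insert, Finset.mem_erase, hx, and_false, or_false, iff_false]
      omega

lemma XmE_XmE_comm (n a i j : ℕ) (hi : 1 ≤ i) (hj : 1 ≤ j) (h : i + 2 ≤ j ∨ j + 2 ≤ i) :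
    XmE n a i * XmE n a j = XmE n a j * XmE n a i := by
  rw [XmE, XmE, genOp_mul, genOp_mul]
  refine genOp_congr (fun s => ?_) (fun s hP => ⟨?_, rfl⟩)
  · by_cases hA : i ∈ s.1 <;> by_cases hB : i - 1 ∈ s.1 <;> by_cases hC : j ∈ s.1 <;>
      by_cases hD : j - 1 ∈ s.1 <;>
      simp only [Finset.mem_insert, Finset.mem_erase, hA, hB, hC, hD, if_true, if_false,
        and_true, and_false, or_false, or_true, true_and, false_and, not_true,
        not_false_iff, iff_true, iff_false, true_iff, false_iff] <;>
      first
        | rfl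
        | omega
        | exact ⟨fun hh => by omega, fun hh => by omega⟩
  · obtain ⟨⟨p1, p2, _⟩, p3, p4, _⟩ := hP
    simp only [Finset.mem_insert, Finset.mem_erase] at p3 p4
    have q1 : j - 1 ≠ i - 1 ∧ j - 1 ∈ s.1 := p3.resolve_left (by omega)
    push_neg at p4
    have q2 : j ∉ s.1 := p4.2 (by omega)
    ext x
    by_cases hx : x ∈ s.1
    · have e1 : x ≠ i := fun h' => p2 (h' ▸ hx)
      have e2 : x ≠ j := fun h' => q2 (h' ▸ hx)
      simp only [Finset.mem_insert, Finset.mem_erase, hx, and_true, or_true, true_and, iff_true]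
      omega
    · have e1 : x ≠ i - 1 := fun h' => hx (h' ▸ p1)
      have e2 : x ≠ j - 1 := fun h' => hx (h' ▸ q1.2)
      simp only [Finset.mem_insert, Finset.mem_erase, hx, and_false, or_false, iff_false]
      omega

lemma XpE_sq (n a i : ℕ) (hi : 1 ≤ i) : XpE n a i * XpE n a i = 0 := by
  rw [XpE, genOp_mul]
  refine genOp_eq_zero (fun s hc => ?_)
  have h := hc.2.1
  simp only [Finset.mem_insert, Finset.mem_erase] at h
  rcases h with h1 | ⟨h1, _⟩
  · omega
  · exact h1 rfl

lemma XmE_sq (n a i : ℕ) (hi : 1 ≤ i) : XmE n a i * XmE n a i = 0 := by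
  rw [XmE, genOp_mul]
  refine genOp_eq_zero (fun s hc => ?_)
  have h := hc.2.1
  simp only [Finset.mem_insert, Finset.mem_erase] at h
  rcases h with h1 | ⟨h1, _⟩
  · omega
  · exact h1 rfl

lemma XpE_aba (n a i j : ℕ) (hi : 1 ≤ i) (hj : 1 ≤ j) (h : i + 1 = j ∨ j + 1 = i) :
    XpE n a i * XpE n a j * XpE n a i = 0 := by
  rw [XpE, XpE, genOp_mul, genOp_mul]
  refine genOp_eq_zero (fun s hc => ?_)
  rcases h with hadj | hadj
  · -- j = i + 1 : the last condition `i - 1 ∉ …` fails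
    refine hc.2.2 ?_
    refine Finset.mem_insert_of_mem (Finset.mem_erase.mpr ⟨by omega, Finset.mem_insert_self _ _⟩)
  · -- i = j + 1 : the last condition `i ∈ …` fails
    have h1 := hc.2.1
    simp only [Finset.mem_insert, Finset.mem_erase] at h1
    rcases h1 with h1 | ⟨_, h1 | ⟨h1, _⟩⟩
    · omega
    · omega
    · exact h1 rfl

lemma XmE_aba (n a i j : ℕ) (hi : 1 ≤ i) (hj : 1 ≤ j) (h : i + 1 = j ∨ j + 1 = i) :
    XmE n a i * XmE n a j * XmE n a i = 0 := by
  rw [XmE, XmE, genOp_mul, genOp_mul]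
  refine genOp_eq_zero (fun s hc => ?_)
  rcases h with hadj | hadj
  · -- j = i + 1 : `i - 1 ∈ …` fails
    have h1 := hc.2.1
    simp only [Finset.mem_insert, Finset.mem_erase] at h1
    rcases h1 with h1 | ⟨_, h1 | ⟨h1, _⟩⟩
    · omega
    · omega
    · exact h1 rfl
  · -- i = j + 1 : `i ∉ …` fails
    refine hc.2.2.1 ?_
    refine Finset.mem_insert_of_mem (Finset.mem_erase.mpr ⟨by omega, Finset.mem_insert_self _ _⟩)
/-! ### Relations for the recursive operators -/

lemma KOp_mul_KinvOp (n a i : ℕ) (h1 : 1 ≤ i) (h2 : i + 1 ≤ n) :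
    KOp n a i * KinvOp n a i = 1 := by
  obtain ⟨-, -, ek, ekv⟩ := ops_eq n a i h1 h2
  rw [ek, ekv, KE_mul_KinvE]

lemma KinvOp_mul_KOp (n a i : ℕ) (h1 : 1 ≤ i) (h2 : i + 1 ≤ n) :
    KinvOp n a i * KOp n a i = 1 := by
  obtain ⟨-, -, ek, ekv⟩ := ops_eq n a i h1 h2
  rw [ek, ekv, KinvE_mul_KE]

lemma KOp_comm (n a i j : ℕ) (h1 : 1 ≤ i) (h2 : i + 1 ≤ n) (h3 : 1 ≤ j) (h4 : j + 1 ≤ n) :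
    KOp n a i * KOp n a j = KOp n a j * KOp n a i := by
  obtain ⟨-, -, ek, -⟩ := ops_eq n a i h1 h2
  obtain ⟨-, -, ek', -⟩ := ops_eq n a j h3 h4
  rw [ek, ek', KE_comm]

lemma KOp_mul_XpOp (n a i j : ℕ) (h1 : 1 ≤ i) (h2 : i + 1 ≤ n) (h3 : 1 ≤ j) (h4 : j + 1 ≤ n) :
    KOp n a i * XpOp n a j = qq ^ (cartN i j) • (XpOp n a j * KOp n a i) := by
  obtain ⟨-, -, ek, -⟩ := ops_eq n a i h1 h2
  obtain ⟨ep, -, -, -⟩ := ops_eq n a j h3 h4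
  rw [ek, ep, KE_mul_XpE n a i j h1 h3]

lemma KOp_mul_XmOp (n a i j : ℕ) (h1 : 1 ≤ i) (h2 : i + 1 ≤ n) (h3 : 1 ≤ j) (h4 : j + 1 ≤ n) :
    KOp n a i * XmOp n a j = qq ^ (-(cartN i j)) • (XmOp n a j * KOp n a i) := by
  obtain ⟨-, -, ek, -⟩ := ops_eq n a i h1 h2
  obtain ⟨-, em, -, -⟩ := ops_eq n a j h3 h4
  rw [ek, em, KE_mul_XmE n a i j h1 h3]

lemma XpOp_XmOp_sl2 (n a i : ℕ) (h1 : 1 ≤ i) (h2 : i + 1 ≤ n) :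
    XpOp n a i * XmOp n a i - XmOp n a i * XpOp n a i
      = (qq - qq⁻¹)⁻¹ • (KOp n a i - KinvOp n a i) := by
  obtain ⟨ep, em, ek, ekv⟩ := ops_eq n a i h1 h2
  rw [ep, em, ek, ekv, sl2E n a i h1 h2]

lemma XpOp_XmOp_comm (n a i j : ℕ) (h1 : 1 ≤ i) (h2 : i + 1 ≤ n) (h3 : 1 ≤ j) (h4 : j + 1 ≤ n)
    (hij : i ≠ j) : XpOp n a i * XmOp n a j = XmOp n a j * XpOp n a i := by
  obtain ⟨ep, -, -, -⟩ := ops_eq n a i h1 h2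
  obtain ⟨-, em, -, -⟩ := ops_eq n a j h3 h4
  rw [ep, em, XpE_XmE_comm n a i j h1 h3 hij]

lemma XpOp_comm (n a i j : ℕ) (h1 : 1 ≤ i) (h2 : i + 1 ≤ n) (h3 : 1 ≤ j) (h4 : j + 1 ≤ n)
    (h : i + 2 ≤ j ∨ j + 2 ≤ i) : XpOp n a i * XpOp n a j = XpOp n a j * XpOp n a i := by
  obtain ⟨ep, -, -, -⟩ := ops_eq n a i h1 h2
  obtain ⟨ep', -, -, -⟩ := ops_eq n a j h3 h4
  rw [ep, ep', XpE_XpE_comm n a i j h1 h3 h]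

lemma XmOp_comm (n a i j : ℕ) (h1 : 1 ≤ i) (h2 : i + 1 ≤ n) (h3 : 1 ≤ j) (h4 : j + 1 ≤ n)
    (h : i + 2 ≤ j ∨ j + 2 ≤ i) : XmOp n a i * XmOp n a j = XmOp n a j * XmOp n a i := by
  obtain ⟨-, em, -, -⟩ := ops_eq n a i h1 h2
  obtain ⟨-, em', -, -⟩ := ops_eq n a j h3 h4
  rw [em, em', XmE_XmE_comm n a i j h1 h3 h]

lemma XpOp_serre (n a i j : ℕ) (h1 : 1 ≤ i) (h2 : i + 1 ≤ n) (h3 : 1 ≤ j) (h4 : j + 1 ≤ n)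
    (hadj : i + 1 = j ∨ j + 1 = i) :
    XpOp n a i ^ 2 * XpOp n a j - (qq + qq⁻¹) • (XpOp n a i * XpOp n a j * XpOp n a i)
      + XpOp n a j * XpOp n a i ^ 2 = 0 := by
  obtain ⟨ep, -, -, -⟩ := ops_eq n a i h1 h2
  obtain ⟨ep', -, -, -⟩ := ops_eq n a j h3 h4
  rw [ep, ep', pow_two, XpE_sq n a i h1, zero_mul, mul_zero,
    XpE_aba n a i j h1 h3 hadj, smul_zero]
  simp

lemma XmOp_serre (n a i j : ℕ) (h1 : 1 ≤ i) (h2 : i + 1 ≤ n) (h3 : 1 ≤ j) (h4 : j + 1 ≤ n)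
    (hadj : i + 1 = j ∨ j + 1 = i) :
    XmOp n a i ^ 2 * XmOp n a j - (qq + qq⁻¹) • (XmOp n a i * XmOp n a j * XmOp n a i)
      + XmOp n a j * XmOp n a i ^ 2 = 0 := by
  obtain ⟨-, em, -, -⟩ := ops_eq n a i h1 h2
  obtain ⟨-, em', -, -⟩ := ops_eq n a j h3 h4
  rw [em, em', pow_two, XmE_sq n a i h1, zero_mul, mul_zero,
    XmE_aba n a i j h1 h3 hadj, smul_zero]
  simp

/-! ### The algebra homomorphism -/

lemma cart_eq {m : ℕ} (i j : Fin m) : cart i j = cartN ((i:ℕ)+1) ((j:ℕ)+1) := by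
  unfold cart cartN
  by_cases h1 : i = j
  · subst h1; simp
  · have h2 : ¬ ((i:ℕ)+1 = (j:ℕ)+1) := by
      simpa [Fin.ext_iff] using h1
    rw [if_neg h1, if_neg h2]
    exact if_congr (by omega) rfl rfl

/-- The assignment of generators. -/
noncomputable def gens (n a : ℕ) : UqGen (n-1) → Module.End A (V n a)
  | UqGen.K i => KOp n a ((i:ℕ)+1)
  | UqGen.Kinv i => KinvOp n a ((i:ℕ)+1)
  | UqGen.Xp i => XpOp n a ((i:ℕ)+1)
  | UqGen.Xm i => XmOp n a ((i:ℕ)+1)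

lemma gens_rel (n a : ℕ) : ∀ ⦃x y : FA (n-1)⦄, uqRel (n-1) x y →
    FreeAlgebra.lift A (gens n a) x = FreeAlgebra.lift A (gens n a) y := by
  have hb1 : ∀ i : Fin (n-1), 1 ≤ (i:ℕ)+1 := fun i => by omega
  have hb2 : ∀ i : Fin (n-1), (i:ℕ)+1+1 ≤ n := fun i => by have := i.isLt; omega
  intro x y h
  induction h with
  | KKinv i =>
    simp only [map_mul, map_one, FA.K, FA.Kinv, FreeAlgebra.lift_ι_apply, gens]
    exact KOp_mul_KinvOp n a _ (hb1 i) (hb2 i)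
  | KinvK i =>
    simp only [map_mul, map_one, FA.K, FA.Kinv, FreeAlgebra.lift_ι_apply, gens]
    exact KinvOp_mul_KOp n a _ (hb1 i) (hb2 i)
  | KK i j =>
    simp only [map_mul, FA.K, FreeAlgebra.lift_ι_apply, gens]
    exact KOp_comm n a _ _ (hb1 i) (hb2 i) (hb1 j) (hb2 j)
  | KXp i j =>
    simp only [map_mul, map_smul, FA.K, FA.Xp, FreeAlgebra.lift_ι_apply, gens]
    rw [cart_eq]
    exact KOp_mul_XpOp n a _ _ (hb1 i) (hb2 i) (hb1 j) (hb2 j)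
  | KXm i j =>
    simp only [map_mul, map_smul, FA.K, FA.Xm, FreeAlgebra.lift_ι_apply, gens]
    rw [cart_eq]
    exact KOp_mul_XmOp n a _ _ (hb1 i) (hb2 i) (hb1 j) (hb2 j)
  | XpXm i j =>
    by_cases hij : i = j
    · subst hij
      rw [if_pos rfl]
      simp only [map_sub, map_mul, map_smul, FA.K, FA.Kinv, FA.Xp, FA.Xm,
        FreeAlgebra.lift_ι_apply, gens]
      exact XpOp_XmOp_sl2 n a _ (hb1 i) (hb2 i)
    · simp only [if_neg hij, map_sub, map_mul, map_zero, FA.Xp, FA.Xm,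
        FreeAlgebra.lift_ι_apply, gens]
      rw [XpOp_XmOp_comm n a _ _ (hb1 i) (hb2 i) (hb1 j) (hb2 j)
        (fun hc => hij (Fin.ext (by omega))), sub_self]
  | XpXp i j hd =>
    simp only [map_mul, FA.Xp, FreeAlgebra.lift_ι_apply, gens]
    exact XpOp_comm n a _ _ (hb1 i) (hb2 i) (hb1 j) (hb2 j) (by omega)
  | XmXm i j hd =>
    simp only [map_mul, FA.Xm, FreeAlgebra.lift_ι_apply, gens]
    exact XmOp_comm n a _ _ (hb1 i) (hb2 i) (hb1 j) (hb2 j) (by omega)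
  | serreP i j hd =>
    simp only [map_add, map_sub, map_mul, map_smul, map_pow, map_zero, FA.Xp,
      FreeAlgebra.lift_ι_apply, gens]
    exact XpOp_serre n a _ _ (hb1 i) (hb2 i) (hb1 j) (hb2 j) (by omega)
  | serreM i j hd =>
    simp only [map_add, map_sub, map_mul, map_smul, map_pow, map_zero, FA.Xm,
      FreeAlgebra.lift_ι_apply, gens]
    exact XmOp_serre n a _ _ (hb1 i) (hb2 i) (hb1 j) (hb2 j) (by omega)
/-- for every `n ≥ 1` and `0 ≤ a ≤ n`, the recursively defined operators
`X_i^±, K_i` on `V_a^n` satisfy all the defining relations of `U_q(sl_n)`, and hence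
determine an `𝔸`-algebra homomorphism `U_q(sl_n) → End_𝔸(V_a^n)`. -/
theorem statement3 (n : ℕ) (hn : 1 ≤ n) (a : ℕ) (ha : a ≤ n) :
    -- each `K_i` is invertible
    (∀ i, 1 ≤ i → i ≤ n-1 →
      KOp n a i * KinvOp n a i = 1 ∧ KinvOp n a i * KOp n a i = 1) ∧
    -- the `K_i` pairwise commute
    (∀ i j, 1 ≤ i → i ≤ n-1 → 1 ≤ j → j ≤ n-1 →
      KOp n a i * KOp n a j = KOp n a j * KOp n a i) ∧
    -- `K_i X_j^± = q^{±a_{ij}} X_j^± K_i`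
    (∀ i j, 1 ≤ i → i ≤ n-1 → 1 ≤ j → j ≤ n-1 →
      KOp n a i * XpOp n a j = qq ^ (cartN i j) • (XpOp n a j * KOp n a i) ∧
      KOp n a i * XmOp n a j = qq ^ (-(cartN i j)) • (XmOp n a j * KOp n a i)) ∧
    -- `X_i⁺ X_j⁻ - X_j⁻ X_i⁺ = δ_{ij} (K_i - K_i⁻¹)/(q - q⁻¹)`
    (∀ i j, 1 ≤ i → i ≤ n-1 → 1 ≤ j → j ≤ n-1 →
      XpOp n a i * XmOp n a j - XmOp n a j * XpOp n a i
        = if i = j then (qq - qq⁻¹)⁻¹ • (KOp n a i - KinvOp n a i) else 0) ∧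
    -- `X_i^± X_j^± = X_j^± X_i^±` when `|i-j| ≥ 2`
    (∀ i j, 1 ≤ i → i ≤ n-1 → 1 ≤ j → j ≤ n-1 → (i + 2 ≤ j ∨ j + 2 ≤ i) →
      XpOp n a i * XpOp n a j = XpOp n a j * XpOp n a i ∧
      XmOp n a i * XmOp n a j = XmOp n a j * XmOp n a i) ∧
    -- the quantum Serre relations when `|i-j| = 1`
    (∀ i j, 1 ≤ i → i ≤ n-1 → 1 ≤ j → j ≤ n-1 → (i + 1 = j ∨ j + 1 = i) →
      XpOp n a i ^ 2 * XpOp n a j - (qq + qq⁻¹) • (XpOp n a i * XpOp n a j * XpOp n a i)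
        + XpOp n a j * XpOp n a i ^ 2 = 0 ∧
      XmOp n a i ^ 2 * XmOp n a j - (qq + qq⁻¹) • (XmOp n a i * XmOp n a j * XmOp n a i)
        + XmOp n a j * XmOp n a i ^ 2 = 0) ∧
    -- hence they determine an `𝔸`-algebra homomorphism `U_q(sl_n) → End(V_a^n)`
    (∃ φ : Uq (n-1) →ₐ[A] Module.End A (V n a),
      (∀ i : Fin (n-1), φ (Uq.K i) = KOp n a ((i : ℕ)+1)) ∧
      (∀ i : Fin (n-1), φ (Uq.Kinv i) = KinvOp n a ((i : ℕ)+1)) ∧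
      (∀ i : Fin (n-1), φ (Uq.Xp i) = XpOp n a ((i : ℕ)+1)) ∧
      (∀ i : Fin (n-1), φ (Uq.Xm i) = XmOp n a ((i : ℕ)+1))) := by
  refine ⟨?_, ?_, ?_, ?_, ?_, ?_, ?_⟩
  · intro i hi hin
    exact ⟨KOp_mul_KinvOp n a i hi (by omega), KinvOp_mul_KOp n a i hi (by omega)⟩
  · intro i j hi hin hj hjn
    exact KOp_comm n a i j hi (by omega) hj (by omega)
  · intro i j hi hin hj hjn
    exact ⟨KOp_mul_XpOp n a i j hi (by omega) hj (by omega),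
      KOp_mul_XmOp n a i j hi (by omega) hj (by omega)⟩
  · intro i j hi hin hj hjn
    by_cases hij : i = j
    · subst hij
      rw [if_pos rfl]
      exact XpOp_XmOp_sl2 n a i hi (by omega)
    · rw [if_neg hij, XpOp_XmOp_comm n a i j hi (by omega) hj (by omega) hij, sub_self]
  · intro i j hi hin hj hjn hd
    exact ⟨XpOp_comm n a i j hi (by omega) hj (by omega) hd,
      XmOp_comm n a i j hi (by omega) hj (by omega) hd⟩
  · intro i j hi hin hj hjn hadj
    exact ⟨XpOp_serre n a i j hi (by omega) hj (by omega) hadj,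
      XmOp_serre n a i j hi (by omega) hj (by omega) hadj⟩
  · refine ⟨RingQuot.liftAlgHom A ⟨FreeAlgebra.lift A (gens n a), gens_rel n a⟩,
      fun i => ?_, fun i => ?_, fun i => ?_, fun i => ?_⟩ <;>
      simp [Uq.K, Uq.Kinv, Uq.Xp, Uq.Xm, FA.K, FA.Kinv, FA.Xp, FA.Xm,
        RingQuot.liftAlgHom_mkAlgHom_apply, FreeAlgebra.lift_ι_apply, gens]

end
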